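/- arXiv:1501.01146 — 8 statements merged into one kernel-verified Lean document; each statement's English description precedes it below -/
import Mathlib

section
/- If Λ = {Λ_i ∈ B(X, Y_i)} is a pg-Bessel sequence for a Banach space X with bound B, and Θ = {Θ_i ∈ B(X, Y_i)} is a sequence of bounded operators such that (Σ_i ‖Λ_i − Θ_i‖^p)^{1/p} < K < ∞, then Θ is a pg-Bessel sequence for X with bound B + K. -/
open NormedSpace Filter

/-- The Banach-space adjoint (dual map) of a continuous linear map. -/
noncomputable def opAdj {X Y : Type*} [NormedAddCommGroup X] [NormedSpace ℝ X]
    [NormedAddCommGroup Y] [NormedSpace ℝ Y] (T : X →L[ℝ] Y) :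
    StrongDual ℝ Y →L[ℝ] StrongDual ℝ X :=
  (ContinuousLinearMap.compL ℝ X Y ℝ).flip T

/-- If `Λ` is a pg-Bessel sequence for `X` with bound `B` and
`(Σ‖Λᵢ − Θᵢ‖^p)^(1/p) < K`, then `Θ` is a pg-Bessel sequence with bound `B + K`. -/
theorem pgBessel_perturbation
    {X : Type*} [NormedAddCommGroup X] [NormedSpace ℝ X] [CompleteSpace X]
    {Y : ℕ → Type*} [∀ i, NormedAddCommGroup (Y i)] [∀ i, NormedSpace ℝ (Y i)]
    [∀ i, CompleteSpace (Y i)]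
    (p : ℝ) (hp : 1 < p)
    (Λ Θ : ∀ i, X →L[ℝ] Y i) (B K : ℝ) (hB : 0 < B)
    (hBessel : ∀ x : X, Summable (fun i => ‖Λ i x‖ ^ p) ∧
      (∑' i, ‖Λ i x‖ ^ p) ^ (1 / p) ≤ B * ‖x‖)
    (hKsum : Summable (fun i => ‖Λ i - Θ i‖ ^ p))
    (hK : (∑' i, ‖Λ i - Θ i‖ ^ p) ^ (1 / p) < K) :
    ∀ x : X, Summable (fun i => ‖Θ i x‖ ^ p) ∧
      (∑' i, ‖Θ i x‖ ^ p) ^ (1 / p) ≤ (B + K) * ‖x‖ := by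
  intro x
  have hp1 : (1:ℝ) ≤ p := le_of_lt hp
  have hp0 : (0:ℝ) < p := lt_trans one_pos hp
  obtain ⟨hsumΛ, hboundΛ⟩ := hBessel x
  set f : ℕ → ℝ := fun i => ‖Λ i x‖
  set g : ℕ → ℝ := fun i => ‖Λ i - Θ i‖ * ‖x‖
  have hf : ∀ i, 0 ≤ f i := fun i => norm_nonneg _
  have hg : ∀ i, 0 ≤ g i := fun i => mul_nonneg (norm_nonneg _) (norm_nonneg _)
  have hgp : ∀ i, g i ^ p = ‖Λ i - Θ i‖ ^ p * ‖x‖ ^ p := fun i =>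
    Real.mul_rpow (norm_nonneg _) (norm_nonneg _)
  have hsumg : Summable fun i => g i ^ p := by
    simp only [hgp]
    exact hKsum.mul_right _
  obtain ⟨hsum, hbound⟩ := Real.Lp_add_le_tsum_of_nonneg hp1 hf hg hsumΛ hsumg
  have hle : ∀ i, ‖Θ i x‖ ≤ f i + g i := by
    intro i
    calc ‖Θ i x‖ = ‖Λ i x - (Λ i - Θ i) x‖ := by simp
    _ ≤ ‖Λ i x‖ + ‖(Λ i - Θ i) x‖ := norm_sub_le _ _
    _ ≤ f i + g i := by
        gcongr
        exact (Λ i - Θ i).le_opNorm x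
  have hlep : ∀ i, ‖Θ i x‖ ^ p ≤ (f i + g i) ^ p := fun i =>
    Real.rpow_le_rpow (norm_nonneg _) (hle i) (le_of_lt hp0)
  have hsumΘ : Summable fun i => ‖Θ i x‖ ^ p :=
    Summable.of_nonneg_of_le (fun i => Real.rpow_nonneg (norm_nonneg _) _) hlep hsum
  refine ⟨hsumΘ, ?_⟩
  have h1 : (∑' i, ‖Θ i x‖ ^ p) ^ (1 / p) ≤ (∑' i, (f i + g i) ^ p) ^ (1 / p) :=
    Real.rpow_le_rpow (tsum_nonneg fun i => Real.rpow_nonneg (norm_nonneg _) _)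
      (Summable.tsum_le_tsum hlep hsumΘ hsum) (by positivity)
  have h2 : (∑' i, g i ^ p) ^ (1 / p) = (∑' i, ‖Λ i - Θ i‖ ^ p) ^ (1 / p) * ‖x‖ := by
    simp only [hgp]
    rw [tsum_mul_right, Real.mul_rpow (tsum_nonneg fun i => Real.rpow_nonneg (norm_nonneg _) _)
      (Real.rpow_nonneg (norm_nonneg _) _), ← Real.rpow_mul (norm_nonneg _), mul_one_div,
      div_self (ne_of_gt hp0), Real.rpow_one]
  have h3 : (∑' i, ‖Λ i - Θ i‖ ^ p) ^ (1 / p) * ‖x‖ ≤ K * ‖x‖ := by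
    gcongr
  calc (∑' i, ‖Θ i x‖ ^ p) ^ (1 / p)
      ≤ (∑' i, (f i + g i) ^ p) ^ (1 / p) := h1
    _ ≤ (∑' i, f i ^ p) ^ (1 / p) + (∑' i, g i ^ p) ^ (1 / p) := hbound
    _ ≤ B * ‖x‖ + K * ‖x‖ := by rw [h2]; exact add_le_add hboundΛ h3
    _ = (B + K) * ‖x‖ := (add_mul _ _ _).symm
end

section
/- Let Λ be a pg-Bessel sequence with bound B, and for each n let Θ^(n) = {Θ^(n)_i ∈ B(X, Y_i)} satisfy: for all ε > 0 there is N with (Σ_i ‖Λ_i − Θ^(n)_i‖^p)^{1/p} < ε for all n ≥ N. Then each Θ^(n) is a pg-Bessel sequence and for n ≥ N, ‖U_{Θ^(n)} − U_Λ‖ ≤ ε and ‖T_{Θ^(n)} − T_Λ‖ ≤ ε. -/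
open NormedSpace Filter

/-- If `Θ⁽ⁿ⁾` converges to the pg-Bessel sequence `Λ` in the sense that
for all `ε > 0` there is `N` with `(Σᵢ‖Λᵢ − Θ⁽ⁿ⁾ᵢ‖^p)^(1/p) < ε` for `n ≥ N`, then the
`Θ⁽ⁿ⁾` are pg-Bessel sequences and, for `n ≥ N`, `‖U_{Θ⁽ⁿ⁾} − U_Λ‖ ≤ ε` and
`‖T_{Θ⁽ⁿ⁾} − T_Λ‖ ≤ ε` (stated pointwise for the analysis and synthesis operators). -/
theorem pgBessel_approx_analysis_synthesis
    {X : Type*} [NormedAddCommGroup X] [NormedSpace ℝ X] [CompleteSpace X]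
    {Y : ℕ → Type*} [∀ i, NormedAddCommGroup (Y i)] [∀ i, NormedSpace ℝ (Y i)]
    [∀ i, CompleteSpace (Y i)]
    (p q : ℝ) (hp : 1 < p) (hpq : 1 / p + 1 / q = 1)
    (Λ : ∀ i, X →L[ℝ] Y i) (Θ : ℕ → ∀ i, X →L[ℝ] Y i) (B : ℝ) (hB : 0 < B)
    (hBessel : ∀ x : X, Summable (fun i => ‖Λ i x‖ ^ p) ∧
      (∑' i, ‖Λ i x‖ ^ p) ^ (1 / p) ≤ B * ‖x‖)
    (happrox : ∀ ε > (0 : ℝ), ∃ N : ℕ, ∀ n ≥ N,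
      Summable (fun i => ‖Λ i - Θ n i‖ ^ p) ∧
      (∑' i, ‖Λ i - Θ n i‖ ^ p) ^ (1 / p) < ε) :
    ∀ ε > (0 : ℝ), ∃ N : ℕ, ∀ n ≥ N,
      -- `Θ⁽ⁿ⁾` is a pg-Bessel sequence
      (∃ C > (0 : ℝ), ∀ x : X, Summable (fun i => ‖Θ n i x‖ ^ p) ∧
        (∑' i, ‖Θ n i x‖ ^ p) ^ (1 / p) ≤ C * ‖x‖) ∧
      -- `‖U_{Θ⁽ⁿ⁾} − U_Λ‖ ≤ ε`
      (∀ x : X, Summable (fun i => ‖Θ n i x - Λ i x‖ ^ p) ∧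
        (∑' i, ‖Θ n i x - Λ i x‖ ^ p) ^ (1 / p) ≤ ε * ‖x‖) ∧
      -- `‖T_{Θ⁽ⁿ⁾} − T_Λ‖ ≤ ε`
      (∀ g : ∀ i, StrongDual ℝ (Y i), Summable (fun i => ‖g i‖ ^ q) →
        Summable (fun i => opAdj (Θ n i) (g i) - opAdj (Λ i) (g i)) ∧
        ‖∑' i, (opAdj (Θ n i) (g i) - opAdj (Λ i) (g i))‖ ≤
          ε * (∑' i, ‖g i‖ ^ q) ^ (1 / q)) := by
  intro ε hε
  obtain ⟨N, hN⟩ := happrox ε hε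
  refine ⟨N, fun n hn => ?_⟩
  obtain ⟨hdsum, hdlt⟩ := hN n hn
  set d : ℕ → ℝ := fun i => ‖Λ i - Θ n i‖ with hd
  have hdnn : ∀ i, 0 ≤ d i := fun i => norm_nonneg _
  have hp0 : (0:ℝ) < p := lt_trans one_pos hp
  have hp0' : (0:ℝ) < 1/p := by positivity
  have hdle : (∑' i, d i ^ p) ^ (1/p) ≤ ε := hdlt.le
  have hdpnn : (0:ℝ) ≤ ∑' i, d i ^ p :=
    tsum_nonneg fun i => Real.rpow_nonneg (hdnn i) p
  -- Claim A : analysis operator difference bound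
  have claimA : ∀ x : X, Summable (fun i => ‖Θ n i x - Λ i x‖ ^ p) ∧
      (∑' i, ‖Θ n i x - Λ i x‖ ^ p) ^ (1/p) ≤ ε * ‖x‖ := by
    intro x
    have hle : ∀ i, ‖Θ n i x - Λ i x‖ ^ p ≤ d i ^ p * ‖x‖ ^ p := by
      intro i
      rw [← Real.mul_rpow (hdnn i) (norm_nonneg x)]
      refine Real.rpow_le_rpow (norm_nonneg _) ?_ hp0.le
      calc ‖Θ n i x - Λ i x‖ = ‖(Λ i - Θ n i) x‖ := by
            rw [ContinuousLinearMap.sub_apply, ← norm_neg, neg_sub]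
        _ ≤ ‖Λ i - Θ n i‖ * ‖x‖ := ContinuousLinearMap.le_opNorm _ _
    have hsum : Summable (fun i => ‖Θ n i x - Λ i x‖ ^ p) :=
      Summable.of_nonneg_of_le (fun i => Real.rpow_nonneg (norm_nonneg _) p) hle
        (hdsum.mul_right (‖x‖ ^ p))
    refine ⟨hsum, ?_⟩
    have ht : (∑' i, ‖Θ n i x - Λ i x‖ ^ p) ≤ (∑' i, d i ^ p) * ‖x‖ ^ p := by
      rw [← tsum_mul_right]
      exact Summable.tsum_le_tsum hle hsum (hdsum.mul_right _)
    calc (∑' i, ‖Θ n i x - Λ i x‖ ^ p) ^ (1/p)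
        ≤ ((∑' i, d i ^ p) * ‖x‖ ^ p) ^ (1/p) :=
          Real.rpow_le_rpow (tsum_nonneg fun i => Real.rpow_nonneg (norm_nonneg _) p)
            ht hp0'.le
      _ = (∑' i, d i ^ p) ^ (1/p) * ‖x‖ := by
          rw [Real.mul_rpow hdpnn (Real.rpow_nonneg (norm_nonneg x) p),
            ← Real.rpow_mul (norm_nonneg x), mul_one_div_cancel hp0.ne', Real.rpow_one]
      _ ≤ ε * ‖x‖ := mul_le_mul_of_nonneg_right hdle (norm_nonneg x)
  refine ⟨⟨B + ε, by linarith, ?_⟩, claimA, ?_⟩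
  · -- Bessel for Θ n
    intro x
    obtain ⟨hΛs, hΛb⟩ := hBessel x
    obtain ⟨hAs, hAb⟩ := claimA x
    have hmk := Real.Lp_add_le_tsum_of_nonneg hp.le (fun i => norm_nonneg (Λ i x))
      (fun i => norm_nonneg (Θ n i x - Λ i x)) hΛs hAs
    have hle : ∀ i, ‖Θ n i x‖ ^ p ≤ (‖Λ i x‖ + ‖Θ n i x - Λ i x‖) ^ p := by
      intro i
      refine Real.rpow_le_rpow (norm_nonneg _) ?_ hp0.le
      calc ‖Θ n i x‖ = ‖Λ i x + (Θ n i x - Λ i x)‖ := by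
            rw [show Λ i x + (Θ n i x - Λ i x) = Θ n i x by abel]
        _ ≤ ‖Λ i x‖ + ‖Θ n i x - Λ i x‖ := norm_add_le _ _
    have hsum : Summable (fun i => ‖Θ n i x‖ ^ p) :=
      Summable.of_nonneg_of_le (fun i => Real.rpow_nonneg (norm_nonneg _) p) hle hmk.1
    refine ⟨hsum, ?_⟩
    calc (∑' i, ‖Θ n i x‖ ^ p) ^ (1/p)
        ≤ (∑' i, (‖Λ i x‖ + ‖Θ n i x - Λ i x‖) ^ p) ^ (1/p) :=
          Real.rpow_le_rpow (tsum_nonneg fun i => Real.rpow_nonneg (norm_nonneg _) p)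
            (Summable.tsum_le_tsum hle hsum hmk.1) hp0'.le
      _ ≤ (∑' i, ‖Λ i x‖ ^ p) ^ (1/p) + (∑' i, ‖Θ n i x - Λ i x‖ ^ p) ^ (1/p) := hmk.2
      _ ≤ B * ‖x‖ + ε * ‖x‖ := add_le_add hΛb hAb
      _ = (B + ε) * ‖x‖ := (add_mul _ _ _).symm
  · -- synthesis operator difference bound
    intro g hg
    have hnorm : ∀ i, ‖opAdj (Θ n i) (g i) - opAdj (Λ i) (g i)‖ ≤ d i * ‖g i‖ := by
      intro i
      have heq : opAdj (Θ n i) (g i) - opAdj (Λ i) (g i) = -((g i).comp (Λ i - Θ n i)) := by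
        ext x
        simp [opAdj]
      rw [heq, norm_neg]
      calc ‖(g i).comp (Λ i - Θ n i)‖ ≤ ‖g i‖ * ‖Λ i - Θ n i‖ :=
            ContinuousLinearMap.opNorm_comp_le _ _
        _ = d i * ‖g i‖ := mul_comm _ _
    have hholder := Real.summable_and_inner_le_Lp_mul_Lq_tsum_of_nonneg (Real.holderConjugate_iff.mpr ⟨hp, by rw [← one_div, ← one_div]; exact hpq⟩) hdnn
      (fun i => norm_nonneg (g i)) hdsum hg
    have hsumn : Summable (fun i => ‖opAdj (Θ n i) (g i) - opAdj (Λ i) (g i)‖) :=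
      Summable.of_nonneg_of_le (fun i => norm_nonneg _) hnorm hholder.1
    refine ⟨hsumn.of_norm, ?_⟩
    calc ‖∑' i, (opAdj (Θ n i) (g i) - opAdj (Λ i) (g i))‖
        ≤ ∑' i, ‖opAdj (Θ n i) (g i) - opAdj (Λ i) (g i)‖ := norm_tsum_le_tsum_norm hsumn
      _ ≤ ∑' i, d i * ‖g i‖ := Summable.tsum_le_tsum hnorm hsumn hholder.1
      _ ≤ (∑' i, d i ^ p) ^ (1/p) * (∑' i, ‖g i‖ ^ q) ^ (1/q) := hholder.2
      _ ≤ ε * (∑' i, ‖g i‖ ^ q) ^ (1/q) := mul_le_mul_of_nonneg_right hdle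
          (Real.rpow_nonneg (tsum_nonneg fun i => Real.rpow_nonneg (norm_nonneg _) q) _)
end

section
/- A family Λ = {Λ_i ∈ B(X, Y_i)} is a pg-Bessel sequence for X with respect to {Y_i} if and only if the synthesis operator T_Λ : (Σ_i ⊕ Y_i^*)_{ℓ^q} → X^*, T_Λ{g_i} = Σ_i Λ_i^* g_i, is well defined and bounded; in this case Σ_i Λ_i^* g_i converges unconditionally for every {g_i} ∈ (Σ_i ⊕ Y_i^*)_{ℓ^q}. -/
open NormedSpace Filter

lemma opAdj_apply {X Y : Type*} [NormedAddCommGroup X] [NormedSpace ℝ X]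
    [NormedAddCommGroup Y] [NormedSpace ℝ Y] (T : X →L[ℝ] Y) (f : StrongDual ℝ Y) (x : X) :
    opAdj T f x = f (T x) := rfl

/-- `Λ` is a pg-Bessel sequence iff the synthesis operator
`T_Λ {gᵢ} = Σᵢ Λᵢ* gᵢ` is well defined (the series converges unconditionally, i.e. is
summable, for every `{gᵢ} ∈ (Σᵢ ⊕ Yᵢ*)_{ℓᑫ}`) and bounded. -/
theorem pgBessel_iff_synthesis_bounded
    {X : Type*} [NormedAddCommGroup X] [NormedSpace ℝ X] [CompleteSpace X]
    {Y : ℕ → Type*} [∀ i, NormedAddCommGroup (Y i)] [∀ i, NormedSpace ℝ (Y i)]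
    [∀ i, CompleteSpace (Y i)]
    (p q : ℝ) (hp : 1 < p) (hpq : 1 / p + 1 / q = 1)
    (Λ : ∀ i, X →L[ℝ] Y i) :
    (∃ B > (0 : ℝ), ∀ x : X, Summable (fun i => ‖Λ i x‖ ^ p) ∧
        (∑' i, ‖Λ i x‖ ^ p) ^ (1 / p) ≤ B * ‖x‖) ↔
      ((∀ g : ∀ i, StrongDual ℝ (Y i), Summable (fun i => ‖g i‖ ^ q) →
          Summable (fun i => opAdj (Λ i) (g i))) ∧
        (∃ C > (0 : ℝ), ∀ g : ∀ i, StrongDual ℝ (Y i), Summable (fun i => ‖g i‖ ^ q) →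
          ‖∑' i, opAdj (Λ i) (g i)‖ ≤ C * (∑' i, ‖g i‖ ^ q) ^ (1 / q))) := by
  have hcpq : Real.HolderConjugate p q := Real.holderConjugate_iff.mpr ⟨hp, by simpa [one_div] using hpq⟩
  have hp0 : 0 < p := hcpq.pos
  have hq0 : 0 < q := hcpq.symm.pos
  constructor
  · rintro ⟨B, hB, hBes⟩
    -- key finite bound
    have key : ∀ (g : ∀ i, StrongDual ℝ (Y i)) (t : Finset ℕ),
        ‖∑ i ∈ t, opAdj (Λ i) (g i)‖ ≤ B * (∑ i ∈ t, ‖g i‖ ^ q) ^ (1 / q) := by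
      intro g t
      have hsq : (0 : ℝ) ≤ (∑ i ∈ t, ‖g i‖ ^ q) ^ (1 / q) :=
        Real.rpow_nonneg (Finset.sum_nonneg fun i _ => Real.rpow_nonneg (norm_nonneg _) _) _
      refine ContinuousLinearMap.opNorm_le_bound _ (by positivity) fun x => ?_
      have h1 : ‖(∑ i ∈ t, opAdj (Λ i) (g i)) x‖ ≤ ∑ i ∈ t, ‖g i‖ * ‖Λ i x‖ := by
        rw [ContinuousLinearMap.sum_apply]
        refine (norm_sum_le _ _).trans (Finset.sum_le_sum fun i _ => ?_)
        rw [opAdj_apply]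
        exact (g i).le_opNorm (Λ i x)
      have h2 : ∑ i ∈ t, ‖g i‖ * ‖Λ i x‖ ≤
          (∑ i ∈ t, ‖g i‖ ^ q) ^ (1 / q) * (∑ i ∈ t, ‖Λ i x‖ ^ p) ^ (1 / p) :=
        Real.inner_le_Lp_mul_Lq_of_nonneg (s := t) hcpq.symm
          (fun i _ => norm_nonneg _) (fun i _ => norm_nonneg _)
      have h3 : (∑ i ∈ t, ‖Λ i x‖ ^ p) ^ (1 / p) ≤ B * ‖x‖ := by
        refine le_trans (Real.rpow_le_rpow
          (Finset.sum_nonneg fun i _ => Real.rpow_nonneg (norm_nonneg _) _)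
          (Summable.sum_le_tsum t (fun i _ => Real.rpow_nonneg (norm_nonneg _) _) (hBes x).1)
          (by positivity)) (hBes x).2
      calc ‖(∑ i ∈ t, opAdj (Λ i) (g i)) x‖
          ≤ (∑ i ∈ t, ‖g i‖ ^ q) ^ (1 / q) * (∑ i ∈ t, ‖Λ i x‖ ^ p) ^ (1 / p) := h1.trans h2
        _ ≤ (∑ i ∈ t, ‖g i‖ ^ q) ^ (1 / q) * (B * ‖x‖) := by
            exact mul_le_mul_of_nonneg_left h3 hsq
        _ = B * (∑ i ∈ t, ‖g i‖ ^ q) ^ (1 / q) * ‖x‖ := by ring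
    have hsumm : ∀ g : ∀ i, StrongDual ℝ (Y i), Summable (fun i => ‖g i‖ ^ q) →
        Summable (fun i => opAdj (Λ i) (g i)) := by
      intro g hg
      rw [summable_iff_vanishing_norm]
      intro ε hε
      obtain ⟨s, hs⟩ := summable_iff_vanishing_norm.1 hg ((ε / 2 / B) ^ q) (by positivity)
      refine ⟨s, fun t ht => ?_⟩
      have hts : ∑ i ∈ t, ‖g i‖ ^ q < (ε / 2 / B) ^ q := by
        have := hs t ht
        rwa [Real.norm_of_nonneg
          (Finset.sum_nonneg fun i _ => Real.rpow_nonneg (norm_nonneg _) _)] at this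
      have h4 : (∑ i ∈ t, ‖g i‖ ^ q) ^ (1 / q) < ε / 2 / B := by
        have := Real.rpow_lt_rpow
          (Finset.sum_nonneg fun i _ => Real.rpow_nonneg (norm_nonneg _) _) hts
          (by positivity : (0:ℝ) < 1 / q)
        rw [one_div] at this ⊢
        rwa [Real.rpow_rpow_inv (by positivity) hq0.ne'] at this
      calc ‖∑ i ∈ t, opAdj (Λ i) (g i)‖ ≤ B * (∑ i ∈ t, ‖g i‖ ^ q) ^ (1 / q) := key g t
        _ < B * (ε / 2 / B) := by exact mul_lt_mul_of_pos_left h4 hB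
        _ = ε / 2 := by field_simp
        _ < ε := by linarith
    refine ⟨hsumm, B, hB, fun g hg => ?_⟩
    have hs := (hsumm g hg).hasSum
    have htend : Tendsto (fun t : Finset ℕ => ‖∑ i ∈ t, opAdj (Λ i) (g i)‖) atTop
        (nhds ‖∑' i, opAdj (Λ i) (g i)‖) := (continuous_norm.tendsto _).comp hs
    refine le_of_tendsto' htend fun t => ?_
    refine (key g t).trans (mul_le_mul_of_nonneg_left ?_ hB.le)
    exact Real.rpow_le_rpow
      (Finset.sum_nonneg fun i _ => Real.rpow_nonneg (norm_nonneg _) _)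
      (Summable.sum_le_tsum t (fun i _ => Real.rpow_nonneg (norm_nonneg _) _) hg) (by positivity)
  · rintro ⟨hsumm, C, hC, hbound⟩
    refine ⟨C, hC, fun x => ?_⟩
    choose f hf1 hf2' using fun i => exists_dual_vector'' ℝ (Λ i x)
    have hf2 : ∀ i, f i (Λ i x) = ‖Λ i x‖ := fun i => by exact_mod_cast hf2' i
    have keyF : ∀ t : Finset ℕ, (∑ i ∈ t, ‖Λ i x‖ ^ p) ^ (1 / p) ≤ C * ‖x‖ := by
      intro t
      set S := ∑ i ∈ t, ‖Λ i x‖ ^ p with hSdef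
      have hS0 : 0 ≤ S :=
        Finset.sum_nonneg fun i _ => Real.rpow_nonneg (norm_nonneg _) _
      rcases hS0.eq_or_lt with h0 | hSpos
      · rw [← h0, Real.zero_rpow (by positivity)]
        positivity
      set g : ∀ i, StrongDual ℝ (Y i) :=
        fun i => (if i ∈ t then ‖Λ i x‖ ^ (p - 1) else 0) • f i with hgdef
      have hg0 : ∀ i ∉ t, g i = 0 := by
        intro i hi; simp [hgdef, hi]
      have hgq : ∀ i ∈ t, ‖g i‖ ^ q ≤ ‖Λ i x‖ ^ p := by
        intro i hi
        have h1 : ‖g i‖ ≤ ‖Λ i x‖ ^ (p - 1) := by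
          rw [hgdef]
          simp only [hi, if_true, norm_smul, Real.norm_eq_abs,
            abs_of_nonneg (Real.rpow_nonneg (norm_nonneg _) _)]
          calc ‖Λ i x‖ ^ (p - 1) * ‖f i‖ ≤ ‖Λ i x‖ ^ (p - 1) * 1 :=
              mul_le_mul_of_nonneg_left (hf1 i) (Real.rpow_nonneg (norm_nonneg _) _)
            _ = ‖Λ i x‖ ^ (p - 1) := mul_one _
        calc ‖g i‖ ^ q ≤ (‖Λ i x‖ ^ (p - 1)) ^ q :=
            Real.rpow_le_rpow (norm_nonneg _) h1 hq0.le
          _ = ‖Λ i x‖ ^ ((p - 1) * q) := by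
            rw [← Real.rpow_mul (norm_nonneg _)]
          _ = ‖Λ i x‖ ^ p := by rw [hcpq.sub_one_mul_conj]
      have hgz : ∀ i ∉ t, ‖g i‖ ^ q = 0 := by
        intro i hi
        rw [hg0 i hi, norm_zero, Real.zero_rpow hq0.ne']
      have hgsummable : Summable (fun i => ‖g i‖ ^ q) :=
        summable_of_ne_finset_zero (s := t) hgz
      have htsumg : ∑' i, ‖g i‖ ^ q ≤ S := by
        rw [tsum_eq_sum hgz]
        exact Finset.sum_le_sum hgq
      have htsumg0 : 0 ≤ ∑' i, ‖g i‖ ^ q :=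
        tsum_nonneg fun i => Real.rpow_nonneg (norm_nonneg _) _
      have heval : (∑ i ∈ t, opAdj (Λ i) (g i)) x = S := by
        rw [ContinuousLinearMap.sum_apply, hSdef]
        refine Finset.sum_congr rfl fun i hi => ?_
        rw [opAdj_apply, hgdef]
        simp only [hi, if_true, ContinuousLinearMap.coe_smul', Pi.smul_apply, smul_eq_mul, hf2 i]
        rcases eq_or_ne ‖Λ i x‖ 0 with hz | hz
        · rw [hz, Real.zero_rpow hcpq.sub_one_ne_zero, Real.zero_rpow hp0.ne', mul_zero]
        · rw [← Real.rpow_add_one hz, sub_add_cancel]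
      have htsumop : ∑' i, opAdj (Λ i) (g i) = ∑ i ∈ t, opAdj (Λ i) (g i) :=
        tsum_eq_sum fun i hi => by rw [hg0 i hi, map_zero]
      have hb := hbound g hgsummable
      rw [htsumop] at hb
      have hSle : S ≤ C * S ^ (1 / q) * ‖x‖ := by
        calc S = (∑ i ∈ t, opAdj (Λ i) (g i)) x := heval.symm
          _ ≤ ‖(∑ i ∈ t, opAdj (Λ i) (g i)) x‖ := le_abs_self _
          _ ≤ ‖∑ i ∈ t, opAdj (Λ i) (g i)‖ * ‖x‖ :=
            ContinuousLinearMap.le_opNorm _ _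
          _ ≤ (C * (∑' i, ‖g i‖ ^ q) ^ (1 / q)) * ‖x‖ :=
            mul_le_mul_of_nonneg_right hb (norm_nonneg _)
          _ ≤ C * S ^ (1 / q) * ‖x‖ := by
            have : (∑' i, ‖g i‖ ^ q) ^ (1 / q) ≤ S ^ (1 / q) :=
              Real.rpow_le_rpow htsumg0 htsumg (by positivity)
            exact mul_le_mul_of_nonneg_right
              (mul_le_mul_of_nonneg_left this hC.le) (norm_nonneg _)
      have hsplit : S = S ^ (1 / p) * S ^ (1 / q) := by
        rw [← Real.rpow_add hSpos, hpq, Real.rpow_one]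
      have hqpos : 0 < S ^ (1 / q) := Real.rpow_pos_of_pos hSpos _
      have h5 : S ^ (1 / p) * S ^ (1 / q) ≤ (C * ‖x‖) * S ^ (1 / q) := by
        rw [← hsplit]
        calc S ≤ C * S ^ (1 / q) * ‖x‖ := hSle
          _ = (C * ‖x‖) * S ^ (1 / q) := by ring
      exact le_of_mul_le_mul_right h5 hqpos
    have hnn : ∀ i, 0 ≤ ‖Λ i x‖ ^ p := fun i => Real.rpow_nonneg (norm_nonneg _) _
    have hsumbd : ∀ t : Finset ℕ, ∑ i ∈ t, ‖Λ i x‖ ^ p ≤ (C * ‖x‖) ^ p := by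
      intro t
      have h1 := keyF t
      have hS0 : 0 ≤ ∑ i ∈ t, ‖Λ i x‖ ^ p := Finset.sum_nonneg fun i _ => hnn i
      calc ∑ i ∈ t, ‖Λ i x‖ ^ p
          = ((∑ i ∈ t, ‖Λ i x‖ ^ p) ^ (1 / p)) ^ p := by
            rw [one_div, Real.rpow_inv_rpow hS0 hp0.ne']
        _ ≤ (C * ‖x‖) ^ p :=
            Real.rpow_le_rpow (Real.rpow_nonneg hS0 _) h1 hp0.le
    have hsummx : Summable fun i => ‖Λ i x‖ ^ p :=
      summable_of_sum_range_le hnn fun n => hsumbd (Finset.range n)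
    refine ⟨hsummx, ?_⟩
    have htle : ∑' i, ‖Λ i x‖ ^ p ≤ (C * ‖x‖) ^ p :=
      Summable.tsum_le_of_sum_le hsummx hsumbd
    calc (∑' i, ‖Λ i x‖ ^ p) ^ (1 / p)
        ≤ ((C * ‖x‖) ^ p) ^ (1 / p) :=
          Real.rpow_le_rpow (tsum_nonneg hnn) htle (by positivity)
      _ = C * ‖x‖ := by
          rw [one_div, Real.rpow_rpow_inv (by positivity) hp0.ne']
end

section
/- If Λ = {Λ_i ∈ B(X, Y_i)} is a pg-frame for X and all Y_i are reflexive, then the adjoint of the synthesis operator T_Λ equals the analysis operator U_Λ (under the identification of ((Σ_i ⊕ Y_i^*)_{ℓ^q})^* with (Σ_i ⊕ Y_i)_{ℓ^p} and of X^** with X). -/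
open NormedSpace Filter

/-- if `Λ` is a pg-frame for `X` and all `Yᵢ` are reflexive, then the
adjoint of the synthesis operator `T_Λ : (Σᵢ ⊕ Yᵢ*)_{ℓᑫ} → X*` equals the analysis
operator `U_Λ`, under the identification of `((Σᵢ ⊕ Yᵢ*)_{ℓᑫ})*` with `(Σᵢ ⊕ Yᵢ)_{ℓᵖ}`
and of `X**` with `X`: for every `x ∈ X` the functional `T_Λ*(x)` acts on
`G ∈ (Σᵢ ⊕ Yᵢ*)_{ℓᑫ}` as `Σᵢ Gᵢ(Λᵢ x)`, i.e. as `U_Λ x`. -/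
theorem synthesis_adjoint_eq_analysis
    {X : Type*} [NormedAddCommGroup X] [NormedSpace ℝ X] [CompleteSpace X]
    {Y : ℕ → Type*} [∀ i, NormedAddCommGroup (Y i)] [∀ i, NormedSpace ℝ (Y i)]
    [∀ i, CompleteSpace (Y i)]
    (p q : ℝ) (hp : 1 < p) (hpq : 1 / p + 1 / q = 1)
    [Fact (1 ≤ ENNReal.ofReal q)]
    (Λ : ∀ i, X →L[ℝ] Y i) (A B : ℝ) (hA : 0 < A) (hB : 0 < B)
    (hframe : ∀ x : X, Summable (fun i => ‖Λ i x‖ ^ p) ∧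
      A * ‖x‖ ≤ (∑' i, ‖Λ i x‖ ^ p) ^ (1 / p) ∧
      (∑' i, ‖Λ i x‖ ^ p) ^ (1 / p) ≤ B * ‖x‖)
    (hrefl : ∀ i, Function.Surjective (inclusionInDoubleDual ℝ (Y i))) :
    ∃ T : lp (fun i => StrongDual ℝ (Y i)) (ENNReal.ofReal q) →L[ℝ] StrongDual ℝ X,
      (∀ G : lp (fun i => StrongDual ℝ (Y i)) (ENNReal.ofReal q),
        Summable (fun i => opAdj (Λ i) ((G : ∀ i, StrongDual ℝ (Y i)) i)) ∧
        T G = ∑' i, opAdj (Λ i) ((G : ∀ i, StrongDual ℝ (Y i)) i)) ∧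
      ∀ (x : X) (G : lp (fun i => StrongDual ℝ (Y i)) (ENNReal.ofReal q)),
        opAdj T (inclusionInDoubleDual ℝ X x) G = ∑' i, (G : ∀ i, StrongDual ℝ (Y i)) i (Λ i x) := by
    classical
  -- exponent facts
  have hpq' : p.HolderConjugate q := Real.holderConjugate_iff.2 ⟨hp, by simpa [one_div] using hpq⟩
  have hq : 1 < q := hpq'.symm.lt
  have hq0 : 0 < q := lt_trans one_pos hq
  have hp0 : 0 < p := lt_trans one_pos hp
  have hqt : (ENNReal.ofReal q).toReal = q := ENNReal.toReal_ofReal hq0.le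
  -- summability of ‖G i‖ ^ q and its tsum
  have hGq : ∀ G : lp (fun i => StrongDual ℝ (Y i)) (ENNReal.ofReal q),
      HasSum (fun i => ‖(G : ∀ i, StrongDual ℝ (Y i)) i‖ ^ q) (‖G‖ ^ q) := by
    intro G
    have := lp.hasSum_norm (p := ENNReal.ofReal q) (by rw [hqt]; exact hq0) G
    rwa [hqt] at this
  -- key finite Hölder bound
  have key : ∀ (t : Finset ℕ) (g : ∀ i, StrongDual ℝ (Y i)) (x : X),
      |∑ i ∈ t, g i (Λ i x)| ≤ (∑ i ∈ t, ‖g i‖ ^ q) ^ (1 / q) * (B * ‖x‖) := by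
    intro t g x
    have h1 : |∑ i ∈ t, g i (Λ i x)| ≤ ∑ i ∈ t, ‖g i‖ * ‖Λ i x‖ := by
      refine (Finset.abs_sum_le_sum_abs _ _).trans (Finset.sum_le_sum fun i _ => ?_)
      exact (g i).le_opNorm (Λ i x)
    have h2 : ∑ i ∈ t, ‖g i‖ * ‖Λ i x‖ ≤
        (∑ i ∈ t, ‖g i‖ ^ q) ^ (1 / q) * (∑ i ∈ t, ‖Λ i x‖ ^ p) ^ (1 / p) :=
      Real.inner_le_Lp_mul_Lq_of_nonneg t hpq'.symm (fun i _ => norm_nonneg _)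
        (fun i _ => norm_nonneg _)
    have h3 : (∑ i ∈ t, ‖Λ i x‖ ^ p) ^ (1 / p) ≤ B * ‖x‖ := by
      refine le_trans ?_ (hframe x).2.2
      refine Real.rpow_le_rpow (Finset.sum_nonneg fun i _ => by positivity) ?_ (by positivity)
      exact Summable.sum_le_tsum t (fun i _ => by positivity) (hframe x).1
    calc |∑ i ∈ t, g i (Λ i x)| ≤ ∑ i ∈ t, ‖g i‖ * ‖Λ i x‖ := h1
      _ ≤ (∑ i ∈ t, ‖g i‖ ^ q) ^ (1 / q) * (∑ i ∈ t, ‖Λ i x‖ ^ p) ^ (1 / p) := h2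
      _ ≤ (∑ i ∈ t, ‖g i‖ ^ q) ^ (1 / q) * (B * ‖x‖) :=
          mul_le_mul_of_nonneg_left h3 (by positivity)
  -- pointwise evaluation of opAdj and finite sums thereof
  have hadj : ∀ (i : ℕ) (g : StrongDual ℝ (Y i)) (x : X), opAdj (Λ i) g x = g (Λ i x) := by
    intro i g x; rfl
  have heval : ∀ (t : Finset ℕ) (g : ∀ i, StrongDual ℝ (Y i)) (x : X),
      (∑ i ∈ t, opAdj (Λ i) (g i)) x = ∑ i ∈ t, g i (Λ i x) := by
    intro t g x
    rw [ContinuousLinearMap.sum_apply]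
    exact Finset.sum_congr rfl fun i _ => hadj i (g i) x
  -- operator norm bound on finite sums
  have opbound : ∀ (t : Finset ℕ) (g : ∀ i, StrongDual ℝ (Y i)),
      ‖∑ i ∈ t, opAdj (Λ i) (g i)‖ ≤ (∑ i ∈ t, ‖g i‖ ^ q) ^ (1 / q) * B := by
    intro t g
    refine ContinuousLinearMap.opNorm_le_bound _ (by positivity) fun x => ?_
    rw [heval t g x]
    calc ‖∑ i ∈ t, g i (Λ i x)‖ ≤ (∑ i ∈ t, ‖g i‖ ^ q) ^ (1 / q) * (B * ‖x‖) := key t g x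
      _ = (∑ i ∈ t, ‖g i‖ ^ q) ^ (1 / q) * B * ‖x‖ := by ring
  -- summability of the adjoint series in the dual
  have hsum : ∀ G : lp (fun i => StrongDual ℝ (Y i)) (ENNReal.ofReal q),
      Summable (fun i => opAdj (Λ i) ((G : ∀ i, StrongDual ℝ (Y i)) i)) := by
    intro G
    rw [summable_iff_vanishing]
    intro e he
    obtain ⟨ε, hε, hball⟩ := Metric.mem_nhds_iff.1 he
    have hδ : (0:ℝ) < (ε / (B + 1)) ^ q := by positivity
    obtain ⟨s, hs⟩ := (summable_iff_vanishing.1 (hGq G).summable)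
      (Metric.ball 0 ((ε / (B + 1)) ^ q)) (Metric.ball_mem_nhds 0 hδ)
    refine ⟨s, fun t ht => ?_⟩
    apply hball
    rw [Metric.mem_ball, dist_zero_right]
    set S := ∑ i ∈ t, ‖(G : ∀ i, StrongDual ℝ (Y i)) i‖ ^ q with hS
    have hSnn : (0:ℝ) ≤ S := Finset.sum_nonneg fun i _ => by positivity
    have h1 : S < (ε / (B + 1)) ^ q := by
      have := hs t ht
      rw [Metric.mem_ball, dist_zero_right] at this
      exact lt_of_le_of_lt (le_abs_self _) this
    have h1' : S ^ (1 / q) < ε / (B + 1) := by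
      have h2 := Real.rpow_lt_rpow hSnn h1 (by positivity : (0:ℝ) < 1 / q)
      rwa [← Real.rpow_mul (by positivity), mul_one_div, div_self (ne_of_gt hq0),
        Real.rpow_one] at h2
    calc ‖∑ i ∈ t, opAdj (Λ i) ((G : ∀ i, StrongDual ℝ (Y i)) i)‖ ≤ S ^ (1 / q) * B := opbound t _
      _ ≤ S ^ (1 / q) * (B + 1) := by
          exact mul_le_mul_of_nonneg_left (by linarith) (by positivity)
      _ < (ε / (B + 1)) * (B + 1) := by
          exact mul_lt_mul_of_pos_right h1' (by linarith)
      _ = ε := by field_simp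
  -- pointwise HasSum for the evaluated series
  have hps : ∀ (G : lp (fun i => StrongDual ℝ (Y i)) (ENNReal.ofReal q)) (x : X),
      HasSum (fun i => (G : ∀ i, StrongDual ℝ (Y i)) i (Λ i x))
        ((∑' i, opAdj (Λ i) ((G : ∀ i, StrongDual ℝ (Y i)) i)) x) := by
    intro G x
    have h := ((hsum G).hasSum).mapL (ContinuousLinearMap.apply ℝ ℝ x)
    simpa [hadj] using h
  -- Hölder bound on the full series
  have hbnd : ∀ (G : lp (fun i => StrongDual ℝ (Y i)) (ENNReal.ofReal q)) (x : X),
      ‖(∑' i, opAdj (Λ i) ((G : ∀ i, StrongDual ℝ (Y i)) i)) x‖ ≤ B * ‖G‖ * ‖x‖ := by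
    intro G x
    rw [← (hps G x).tsum_eq]
    have hmul : (Summable fun i => ‖(G : ∀ i, StrongDual ℝ (Y i)) i‖ * ‖Λ i x‖) ∧
        ∑' i, ‖(G : ∀ i, StrongDual ℝ (Y i)) i‖ * ‖Λ i x‖ ≤
          (∑' i, ‖(G : ∀ i, StrongDual ℝ (Y i)) i‖ ^ q) ^ (1 / q) *
            (∑' i, ‖Λ i x‖ ^ p) ^ (1 / p) :=
      Real.summable_and_inner_le_Lp_mul_Lq_tsum_of_nonneg hpq'.symm (fun i => norm_nonneg _)
        (fun i => norm_nonneg _) (hGq G).summable (hframe x).1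
    have habs : ∀ i, ‖(G : ∀ i, StrongDual ℝ (Y i)) i (Λ i x)‖ ≤
        ‖(G : ∀ i, StrongDual ℝ (Y i)) i‖ * ‖Λ i x‖ := fun i =>
      ((G : ∀ i, StrongDual ℝ (Y i)) i).le_opNorm (Λ i x)
    calc ‖∑' i, (G : ∀ i, StrongDual ℝ (Y i)) i (Λ i x)‖
        ≤ ∑' i, ‖(G : ∀ i, StrongDual ℝ (Y i)) i‖ * ‖Λ i x‖ := by
          refine (norm_tsum_le_tsum_norm (hmul.1.of_nonneg_of_le (fun i => norm_nonneg _)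
            habs)).trans ?_
          exact Summable.tsum_le_tsum habs (hmul.1.of_nonneg_of_le (fun i => norm_nonneg _) habs) hmul.1
      _ ≤ (∑' i, ‖(G : ∀ i, StrongDual ℝ (Y i)) i‖ ^ q) ^ (1 / q) *
            (∑' i, ‖Λ i x‖ ^ p) ^ (1 / p) := hmul.2
      _ ≤ ‖G‖ * (B * ‖x‖) := by
          have e1 : (∑' i, ‖(G : ∀ i, StrongDual ℝ (Y i)) i‖ ^ q) ^ (1 / q) = ‖G‖ := by
            rw [(hGq G).tsum_eq, ← Real.rpow_mul (norm_nonneg _), mul_one_div,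
              div_self (ne_of_gt hq0), Real.rpow_one]
          rw [e1]
          exact mul_le_mul_of_nonneg_left (hframe x).2.2 (norm_nonneg _)
      _ = B * ‖G‖ * ‖x‖ := by ring
  -- the synthesis operator
  let T₀ : lp (fun i => StrongDual ℝ (Y i)) (ENNReal.ofReal q) →ₗ[ℝ] StrongDual ℝ X :=
    { toFun := fun G => ∑' i, opAdj (Λ i) ((G : ∀ i, StrongDual ℝ (Y i)) i)
      map_add' := fun G H => by
        have h : (fun i => opAdj (Λ i) (((G + H : lp _ _) : ∀ i, StrongDual ℝ (Y i)) i)) =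
            fun i => opAdj (Λ i) ((G : ∀ i, StrongDual ℝ (Y i)) i) +
              opAdj (Λ i) ((H : ∀ i, StrongDual ℝ (Y i)) i) := by
          funext i
          rw [lp.coeFn_add, Pi.add_apply, map_add]
        dsimp only
        rw [h, Summable.tsum_add (hsum G) (hsum H)]
      map_smul' := fun c G => by
        have h : (fun i => opAdj (Λ i) (((c • G : lp _ _) : ∀ i, StrongDual ℝ (Y i)) i)) =
            fun i => c • opAdj (Λ i) ((G : ∀ i, StrongDual ℝ (Y i)) i) := by
          funext i
          rw [lp.coeFn_smul, Pi.smul_apply, map_smul]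
        dsimp only
        rw [h, Summable.tsum_const_smul c (hsum G)]
        rfl }
  have hT₀ : ∀ G, ‖T₀ G‖ ≤ B * ‖G‖ := fun G =>
    ContinuousLinearMap.opNorm_le_bound _ (by positivity) (hbnd G)
  refine ⟨T₀.mkContinuous (B) hT₀, fun G => ⟨hsum G, rfl⟩, fun x G => ?_⟩
  have : opAdj (T₀.mkContinuous B hT₀) (inclusionInDoubleDual ℝ X x) G =
      (T₀ G) x := rfl
  rw [this]
  exact (hps G x).tsum_eq.symm
end

section
/- If Λ = {Λ_i ∈ B(X, Y_i)} is a qg-Riesz basis for X^* with respect to {Y_i}, then Λ is a pg-frame for X with respect to {Y_i}. -/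
open NormedSpace Filter

section Aux

lemma approx_preimage {E F : Type*} [NormedAddCommGroup E] [NormedSpace ℝ E]
    [NormedAddCommGroup F] [NormedSpace ℝ F]
    (T : E →L[ℝ] F) {A : ℝ} (hA : 0 < A)
    (h : ∀ G : F →L[ℝ] ℝ, A * ‖G‖ ≤ ‖G.comp T‖) (w : F) :
    ∃ x : E, ‖x‖ ≤ ‖w‖ / A ∧ ‖w - T x‖ ≤ ‖w‖ / 2 := by
  by_cases hw : w = 0
  · exact ⟨0, by simp [hw]⟩
  have hwpos : 0 < ‖w‖ := norm_pos_iff.mpr hw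
  set r : ℝ := ‖w‖ / A with hr
  have hrpos : 0 < r := div_pos hwpos hA
  set S : Set F := closure (T '' Metric.closedBall 0 r) with hS
  have hwS : w ∈ S := by
    by_contra hws
    have hconv : Convex ℝ S := ((convex_closedBall (0:E) r).linear_image T.toLinearMap).closure
    obtain ⟨G, u, hGS, hGw⟩ := geometric_hahn_banach_closed_point hconv isClosed_closure hws
    have h0S : (0:F) ∈ S := by
      refine subset_closure ⟨0, ?_, by simp⟩
      simp [Metric.mem_closedBall, hrpos.le]
    have hu0 : 0 < u := by simpa using hGS 0 h0S
    have hball : ∀ x : E, ‖x‖ ≤ r → |G (T x)| ≤ u := by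
      intro x hx
      have h1 : G (T x) < u := hGS _ (subset_closure ⟨x, by simpa [Metric.mem_closedBall] using hx, rfl⟩)
      have h2 : G (T (-x)) < u := hGS _ (subset_closure ⟨-x, by simpa [Metric.mem_closedBall] using hx, rfl⟩)
      rw [abs_le]
      constructor
      · simpa [neg_le] using h2.le
      · exact h1.le
    have hopn : ‖G.comp T‖ ≤ u / r := by
      refine ContinuousLinearMap.opNorm_le_bound _ (div_nonneg hu0.le hrpos.le) ?_
      intro x
      by_cases hx : x = 0
      · simp [hx]
      have hxpos : 0 < ‖x‖ := norm_pos_iff.mpr hx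
      have hc : 0 < r / ‖x‖ := div_pos hrpos hxpos
      have key := hball ((r / ‖x‖) • x) (by rw [norm_smul, Real.norm_eq_abs, abs_of_pos hc]; field_simp; exact le_rfl)
      rw [map_smul, map_smul] at key
      have hkey : (r / ‖x‖) * |G (T x)| ≤ u := by
        rwa [smul_eq_mul, abs_mul, abs_of_pos hc] at key
      have h3 : r * |G (T x)| ≤ u * ‖x‖ := by
        rw [div_mul_eq_mul_div, div_le_iff₀ hxpos] at hkey
        linarith
      calc ‖(G.comp T) x‖ = |G (T x)| := by simp [Real.norm_eq_abs]
        _ ≤ u / r * ‖x‖ := by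
            rw [div_mul_eq_mul_div, le_div_iff₀ hrpos]
            linarith
    have hGn : u / ‖w‖ < ‖G‖ := by
      rw [div_lt_iff₀ hwpos]
      calc u < G w := hGw
        _ ≤ |G w| := le_abs_self _
        _ ≤ ‖G‖ * ‖w‖ := by simpa [Real.norm_eq_abs] using G.le_opNorm w
    have hchain : A * (u / ‖w‖) < u / r := by
      calc A * (u / ‖w‖) < A * ‖G‖ := by exact (mul_lt_mul_iff_right₀ hA).mpr hGn
        _ ≤ ‖G.comp T‖ := h G
        _ ≤ u / r := hopn
    rw [hr] at hchain
    rw [div_div_eq_mul_div] at hchain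
    have : u * A / ‖w‖ = A * (u / ‖w‖) := by ring
    rw [this] at hchain
    exact lt_irrefl _ hchain
  rw [hS, Metric.mem_closure_iff] at hwS
  obtain ⟨y, hy, hdist⟩ := hwS (‖w‖ / 2) (by positivity)
  obtain ⟨x, hx, rfl⟩ := hy
  rw [Metric.mem_closedBall, dist_zero_right] at hx
  exact ⟨x, hx, by rw [← dist_eq_norm]; exact hdist.le⟩

lemma surj_of_dual_bound {E F : Type*} [NormedAddCommGroup E] [NormedSpace ℝ E] [CompleteSpace E]
    [NormedAddCommGroup F] [NormedSpace ℝ F]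
    (T : E →L[ℝ] F) {A : ℝ} (hA : 0 < A)
    (h : ∀ G : F →L[ℝ] ℝ, A * ‖G‖ ≤ ‖G.comp T‖) : Function.Surjective T := by
  intro z
  classical
  set F0 : F → E := fun w => Classical.choose (approx_preimage T hA h w) with hF0
  have hF0spec : ∀ w, ‖F0 w‖ ≤ ‖w‖ / A ∧ ‖w - T (F0 w)‖ ≤ ‖w‖ / 2 :=
    fun w => Classical.choose_spec (approx_preimage T hA h w)
  set zs : ℕ → F := fun n => Nat.rec z (fun _ w => w - T (F0 w)) n with hzs
  have hzs0 : zs 0 = z := rfl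
  have hzsS : ∀ n, zs (n+1) = zs n - T (F0 (zs n)) := fun n => rfl
  have hzbound : ∀ n, ‖zs n‖ ≤ ‖z‖ / 2 ^ n := by
    intro n
    induction n with
    | zero => exact le_of_eq (by rw [hzs0, pow_zero, div_one])
    | succ n ih =>
      rw [hzsS]
      calc ‖zs n - T (F0 (zs n))‖ ≤ ‖zs n‖ / 2 := (hF0spec (zs n)).2
        _ ≤ (‖z‖ / 2 ^ n) / 2 := by linarith
        _ = ‖z‖ / 2 ^ (n+1) := by ring
  set xs : ℕ → E := fun n => F0 (zs n) with hxs
  have hxbound : ∀ n, ‖xs n‖ ≤ (‖z‖ / A) * (1/2) ^ n := by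
    intro n
    calc ‖xs n‖ ≤ ‖zs n‖ / A := (hF0spec (zs n)).1
      _ ≤ (‖z‖ / 2 ^ n) / A := by gcongr; exact hzbound n
      _ = (‖z‖ / A) * (1/2) ^ n := by
          rw [div_pow, one_pow]; ring
  have hsumnorm : Summable (fun n => ‖xs n‖) := by
    refine Summable.of_nonneg_of_le (fun n => norm_nonneg _) hxbound ?_
    exact summable_geometric_two.mul_left _
  have hxsum : Summable xs := hsumnorm.of_norm
  refine ⟨∑' n, xs n, ?_⟩
  have hTx : HasSum (fun n => T (xs n)) (T (∑' n, xs n)) := hxsum.hasSum.mapL T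
  have hpartial : ∀ n, ∑ i ∈ Finset.range n, T (xs i) = z - zs n := by
    intro n
    have : ∀ i, T (xs i) = zs i - zs (i+1) := by
      intro i; rw [hzsS i]; abel
    simp_rw [this]
    rw [Finset.sum_range_sub' zs n, hzs0]
  have hzs_lim : Tendsto zs atTop (nhds 0) := by
    apply squeeze_zero_norm hzbound
    have : (fun n : ℕ => ‖z‖ / 2 ^ n) = fun n : ℕ => ‖z‖ * (1/2 : ℝ) ^ n := by
      funext n; rw [div_pow, one_pow]; ring
    rw [this]
    simpa using (tendsto_pow_atTop_nhds_zero_of_lt_one (by norm_num) (by norm_num : (1/2:ℝ) < 1)).const_mul ‖z‖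
  have h2 : Tendsto (fun n => ∑ i ∈ Finset.range n, T (xs i)) atTop (nhds (z - 0)) := by
    simp_rw [hpartial]
    exact tendsto_const_nhds.sub hzs_lim
  have := tendsto_nhds_unique hTx.tendsto_sum_nat h2
  rw [this, sub_zero]

end Aux

set_option maxHeartbeats 2000000 in
/-- a qg-Riesz basis for `X*` is a pg-frame for `X`. -/
theorem qgRieszBasis_is_pgFrame
    {X : Type*} [NormedAddCommGroup X] [NormedSpace ℝ X] [CompleteSpace X]
    {Y : ℕ → Type*} [∀ i, NormedAddCommGroup (Y i)] [∀ i, NormedSpace ℝ (Y i)]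
    [∀ i, CompleteSpace (Y i)]
    (p q : ℝ) (hp : 1 < p) (hpq : 1 / p + 1 / q = 1)
    (Λ : ∀ i, X →L[ℝ] Y i)
    -- (i) g-completeness
    (hcomplete : ∀ x : X, (∀ i, Λ i x = 0) → x = 0)
    -- (ii) the two-sided ℓ^q inequality on finite sums
    (hriesz : ∃ A B : ℝ, 0 < A ∧ 0 < B ∧
      ∀ (s : Finset ℕ) (g : ∀ i, StrongDual ℝ (Y i)),
        A * (∑ i ∈ s, ‖g i‖ ^ q) ^ (1 / q) ≤ ‖∑ i ∈ s, opAdj (Λ i) (g i)‖ ∧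
        ‖∑ i ∈ s, opAdj (Λ i) (g i)‖ ≤ B * (∑ i ∈ s, ‖g i‖ ^ q) ^ (1 / q)) :
    ∃ A' B' : ℝ, 0 < A' ∧ 0 < B' ∧ ∀ x : X, Summable (fun i => ‖Λ i x‖ ^ p) ∧
      A' * ‖x‖ ≤ (∑' i, ‖Λ i x‖ ^ p) ^ (1 / p) ∧
      (∑' i, ‖Λ i x‖ ^ p) ^ (1 / p) ≤ B' * ‖x‖ := by
  classical
  obtain ⟨A, B, hA, hB, hRB⟩ := hriesz
  have hp0 : 0 < p := lt_trans zero_lt_one hp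
  have hcj : p.HolderConjugate q := Real.holderConjugate_iff.mpr ⟨hp, by rw [← one_div, ← one_div]; exact hpq⟩
  have hq0 : 0 < q := hcj.symm.pos
  have hq1 : 1 < q := (Real.holderConjugate_iff.mp hcj.symm).1
  -- Part 1: finite upper bound
  have key1 : ∀ (x : X) (s : Finset ℕ), ∑ i ∈ s, ‖Λ i x‖ ^ p ≤ (B * ‖x‖) ^ p := by
    intro x s
    set S := ∑ i ∈ s, ‖Λ i x‖ ^ p with hSdef
    have hS0 : 0 ≤ S := Finset.sum_nonneg fun i _ => Real.rpow_nonneg (norm_nonneg _) _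
    choose f hf1 hf2 using fun i => exists_dual_vector'' ℝ (Λ i x)
    have hf2' : ∀ i, f i (Λ i x) = ‖Λ i x‖ := fun i => by simpa using hf2 i
    set g : ∀ i, StrongDual ℝ (Y i) := fun i => (‖Λ i x‖ ^ (p-1)) • f i with hgdef
    have hgn : ∀ i, ‖g i‖ ≤ ‖Λ i x‖ ^ (p-1) := by
      intro i
      calc ‖g i‖ = |‖Λ i x‖ ^ (p-1)| * ‖f i‖ := by rw [hgdef, norm_smul, Real.norm_eq_abs]
        _ ≤ ‖Λ i x‖ ^ (p-1) * 1 := by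
            rw [abs_of_nonneg (Real.rpow_nonneg (norm_nonneg _) _)]
            exact mul_le_mul_of_nonneg_left (hf1 i) (Real.rpow_nonneg (norm_nonneg _) _)
        _ = _ := mul_one _
    have hgq : ∑ i ∈ s, ‖g i‖ ^ q ≤ S := by
      apply Finset.sum_le_sum; intro i _
      calc ‖g i‖ ^ q ≤ (‖Λ i x‖ ^ (p-1)) ^ q :=
            Real.rpow_le_rpow (norm_nonneg _) (hgn i) hq0.le
        _ = ‖Λ i x‖ ^ p := by rw [← Real.rpow_mul (norm_nonneg _), hcj.sub_one_mul_conj]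
    have heval : (∑ i ∈ s, opAdj (Λ i) (g i)) x = S := by
      rw [ContinuousLinearMap.sum_apply, hSdef]
      apply Finset.sum_congr rfl
      intro i _
      show g i (Λ i x) = ‖Λ i x‖ ^ p
      rw [hgdef]
      simp only [ContinuousLinearMap.smul_apply, hf2' i, smul_eq_mul]
      by_cases hz : ‖Λ i x‖ = 0
      · rw [hz, mul_zero, Real.zero_rpow hp0.ne']
      · rw [← Real.rpow_add_one hz, sub_add_cancel]
    have hmain : S ≤ B * ‖x‖ * S ^ (1/q) := by
      calc S = (∑ i ∈ s, opAdj (Λ i) (g i)) x := heval.symm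
        _ ≤ ‖∑ i ∈ s, opAdj (Λ i) (g i)‖ * ‖x‖ := by
            calc (∑ i ∈ s, opAdj (Λ i) (g i)) x ≤ |(∑ i ∈ s, opAdj (Λ i) (g i)) x| := le_abs_self _
              _ ≤ _ := by
                  simpa [Real.norm_eq_abs] using (∑ i ∈ s, opAdj (Λ i) (g i)).le_opNorm x
        _ ≤ (B * (∑ i ∈ s, ‖g i‖^q)^(1/q)) * ‖x‖ :=
            mul_le_mul_of_nonneg_right (hRB s g).2 (norm_nonneg _)
        _ ≤ (B * S^(1/q)) * ‖x‖ := by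
            have h1 : (∑ i ∈ s, ‖g i‖^q)^(1/q) ≤ S^(1/q) :=
              Real.rpow_le_rpow (Finset.sum_nonneg fun i _ => Real.rpow_nonneg (norm_nonneg _) _)
                hgq (by positivity)
            exact mul_le_mul_of_nonneg_right (mul_le_mul_of_nonneg_left h1 hB.le) (norm_nonneg _)
        _ = B * ‖x‖ * S ^ (1/q) := by ring
    rcases eq_or_lt_of_le hS0 with hS | hS
    · rw [← hS]; positivity
    · have hqpow : 0 < S ^ (1/q) := Real.rpow_pos_of_pos hS _
      have hone : (1:ℝ)/q + 1/p = 1 := by linarith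
      have hfac : S = S ^ (1/q) * S ^ (1/p) := by
        rw [← Real.rpow_add hS, hone, Real.rpow_one]
      have h1q : S ^ (1/p) ≤ B * ‖x‖ := by
        have hle : S ^ (1/q) * S ^ (1/p) ≤ S ^ (1/q) * (B * ‖x‖) := by
          calc S ^ (1/q) * S ^ (1/p) = S := hfac.symm
            _ ≤ B * ‖x‖ * S ^ (1/q) := hmain
            _ = S ^ (1/q) * (B * ‖x‖) := by ring
        exact (mul_le_mul_iff_right₀ hqpow).mp hle
      calc S = (S ^ (1/p)) ^ p := by
            rw [← Real.rpow_mul hS0, one_div_mul_cancel hp0.ne', Real.rpow_one]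
        _ ≤ (B * ‖x‖) ^ p := Real.rpow_le_rpow (Real.rpow_nonneg hS0 _) h1q hp0.le
  have hnn : ∀ (x : X) i, (0:ℝ) ≤ ‖Λ i x‖ ^ p := fun x i => Real.rpow_nonneg (norm_nonneg _) _
  have hsummable : ∀ x : X, Summable (fun i => ‖Λ i x‖ ^ p) :=
    fun x => summable_of_sum_le (fun i => hnn x i) (key1 x)
  have htsum_le : ∀ x : X, (∑' i, ‖Λ i x‖^p) ≤ (B*‖x‖)^p :=
    fun x => Summable.tsum_le_of_sum_le (hsummable x) (key1 x)
  have hupper : ∀ x : X, (∑' i, ‖Λ i x‖^p)^(1/p) ≤ B * ‖x‖ := by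
    intro x
    have h := Real.rpow_le_rpow (tsum_nonneg fun i => hnn x i) (htsum_le x)
      (by positivity : (0:ℝ) ≤ 1/p)
    rwa [← Real.rpow_mul (by positivity : (0:ℝ) ≤ B * ‖x‖), mul_one_div_cancel hp0.ne',
      Real.rpow_one] at h
  -- Part 2: the analysis operator U : X → lp Y pe
  set pe : ENNReal := ENNReal.ofReal p with hpe
  have hpe_toReal : pe.toReal = p := ENNReal.toReal_ofReal hp0.le
  haveI hfact : Fact (1 ≤ pe) := ⟨ENNReal.one_le_ofReal.mpr hp.le⟩
  have hpe_pos : 0 < pe.toReal := by rw [hpe_toReal]; exact hp0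
  have hpe_ne_top : pe ≠ ⊤ := ENNReal.ofReal_ne_top
  have hmem : ∀ x : X, Memℓp (fun i => Λ i x) pe := by
    intro x
    apply memℓp_gen' (C := (B*‖x‖)^p)
    intro s
    rw [hpe_toReal]
    exact key1 x s
  let Uf : X →ₗ[ℝ] lp Y pe :=
    { toFun := fun x => (⟨fun i => Λ i x, hmem x⟩ : lp Y pe)
      map_add' := by
        intro x y
        apply lp.ext
        funext i
        simp [lp.coeFn_add, Pi.add_apply]; rfl
      map_smul' := by
        intro c x
        apply lp.ext
        funext i
        simp [lp.coeFn_smul, Pi.smul_apply] }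
  have hUf_norm : ∀ x, ‖Uf x‖ = (∑' i, ‖Λ i x‖ ^ p)^(1/p) := by
    intro x
    rw [lp.norm_eq_tsum_rpow hpe_pos, hpe_toReal]
    rfl
  let U : X →L[ℝ] lp Y pe := Uf.mkContinuous B (fun x => by
    rw [hUf_norm]
    exact hupper x)
  have hU_norm : ∀ x, ‖U x‖ = (∑' i, ‖Λ i x‖ ^ p)^(1/p) := hUf_norm
  have hU_coe : ∀ (x : X) (i : ℕ), (U x : ∀ i, Y i) i = Λ i x := fun x i => rfl
  -- single vectors in lp
  have hsingle_norm : ∀ (i : ℕ) (a : Y i), ‖lp.single pe i a‖ = ‖a‖ := by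
    intro i a
    have h := lp.norm_single (ENNReal.toReal_pos_iff.mp hpe_pos).1 i a
    exact h
  have hsingle_add : ∀ (i : ℕ) (a b : Y i),
      lp.single pe i (a+b) = lp.single pe i a + lp.single pe i b := by
    intro i a b
    apply lp.ext
    funext j
    by_cases hj : j = i
    · subst hj
      simp [lp.coeFn_add, lp.single_apply_self]
    · simp [lp.coeFn_add, lp.single_apply_ne pe i _ hj]
  -- Part 3: the dual bound  A‖G‖ ≤ ‖G ∘ U‖
  have hdual : ∀ G : (lp Y pe) →L[ℝ] ℝ, A * ‖G‖ ≤ ‖G.comp U‖ := by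
    intro G
    set sing : ∀ i, Y i →L[ℝ] lp Y pe := fun i =>
      LinearMap.mkContinuous
        { toFun := fun a => lp.single pe i a
          map_add' := hsingle_add i
          map_smul' := fun c a => by simpa using lp.single_smul pe i a c }
        1 (fun a => by rw [one_mul]; exact le_of_eq (hsingle_norm i a)) with hsing
    set g : ∀ i, StrongDual ℝ (Y i) := fun i => G.comp (sing i) with hgD
    have claim3a : ∀ s : Finset ℕ, ∑ i ∈ s, ‖g i‖^q ≤ ‖G‖^q := by
      intro s
      set S := ∑ i ∈ s, ‖g i‖^q with hSdef
      have hS0 : 0 ≤ S := Finset.sum_nonneg fun i _ => Real.rpow_nonneg (norm_nonneg _) _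
      have hmain : S ≤ ‖G‖ * S^(1/p) := by
        refine le_of_forall_pos_le_add ?_
        intro ε hε
        set D := ∑ i ∈ s, ‖g i‖^(q-1) with hDdef
        have hD0 : 0 ≤ D := Finset.sum_nonneg fun i _ => Real.rpow_nonneg (norm_nonneg _) _
        set δ := ε / (1 + D) with hδdef
        have hδpos : 0 < δ := div_pos hε (by linarith)
        have hy : ∀ i, ∃ y : Y i, ‖y‖ ≤ 1 ∧ ‖g i‖ - δ ≤ g i y := by
          intro i
          obtain ⟨y, hy1, hy2⟩ := (g i).exists_lt_apply_of_lt_opNorm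
            (show ‖g i‖ - δ < ‖g i‖ by linarith)
          rcases le_or_gt 0 (g i y) with hgs | hgs
          · exact ⟨y, hy1.le, by rw [Real.norm_eq_abs, abs_of_nonneg hgs] at hy2; exact hy2.le⟩
          · refine ⟨-y, by simpa using hy1.le, ?_⟩
            rw [map_neg]
            rw [Real.norm_eq_abs, abs_of_neg hgs] at hy2
            exact hy2.le
        choose y hy1 hy2 using hy
        set w : ∀ j, Y j := fun j => (‖g j‖^(q-1)) • y j with hwdef
        set z : lp Y pe := ∑ i ∈ s, lp.single pe i (w i) with hzdef
        have hznorm : ‖z‖ ≤ S^(1/p) := by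
          have h1 : ‖z‖ ^ p = ∑ i ∈ s, ‖w i‖^p := by
            have h := lp.norm_sum_single hpe_pos w s
            rw [hpe_toReal] at h
            rw [hzdef]
            exact h
          have h2 : ∑ i ∈ s, ‖w i‖^p ≤ S := by
            apply Finset.sum_le_sum
            intro i _
            have hwn : ‖w i‖ ≤ ‖g i‖^(q-1) := by
              calc ‖w i‖ = |‖g i‖^(q-1)| * ‖y i‖ := by rw [hwdef, norm_smul, Real.norm_eq_abs]
                _ ≤ ‖g i‖^(q-1) * 1 := by
                    rw [abs_of_nonneg (Real.rpow_nonneg (norm_nonneg _) _)]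
                    exact mul_le_mul_of_nonneg_left (hy1 i) (Real.rpow_nonneg (norm_nonneg _) _)
                _ = _ := mul_one _
            calc ‖w i‖^p ≤ (‖g i‖^(q-1))^p := Real.rpow_le_rpow (norm_nonneg _) hwn hp0.le
              _ = ‖g i‖^q := by rw [← Real.rpow_mul (norm_nonneg _), hcj.symm.sub_one_mul_conj]
          have h3 : ‖z‖^p ≤ S := h1.le.trans h2
          calc ‖z‖ = (‖z‖^p)^(1/p) := by
                rw [← Real.rpow_mul (norm_nonneg _), mul_one_div_cancel hp0.ne', Real.rpow_one]
            _ ≤ S^(1/p) := Real.rpow_le_rpow (Real.rpow_nonneg (norm_nonneg _) _) h3 (by positivity)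
        have hGz : S - ε ≤ G z := by
          have h1 : G z = ∑ i ∈ s, g i (w i) := by
            rw [hzdef, map_sum]
            exact Finset.sum_congr rfl fun i _ => rfl
          have h2 : ∀ i ∈ s, ‖g i‖^q - ‖g i‖^(q-1) * δ ≤ g i (w i) := by
            intro i _
            have hgw : g i (w i) = (‖g i‖^(q-1)) * g i (y i) := by
              rw [hwdef]
              simp [map_smul]
            rw [hgw]
            have hc0 : (0:ℝ) ≤ ‖g i‖^(q-1) := Real.rpow_nonneg (norm_nonneg _) _
            have hkey := mul_le_mul_of_nonneg_left (hy2 i) hc0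
            rw [mul_sub] at hkey
            have hq' : ‖g i‖^(q-1) * ‖g i‖ = ‖g i‖^q := by
              by_cases hz0 : ‖g i‖ = 0
              · rw [hz0, mul_zero, Real.zero_rpow hq0.ne']
              · rw [← Real.rpow_add_one hz0, sub_add_cancel]
            rw [hq'] at hkey
            exact hkey
          have hsum2 : S - D * δ ≤ ∑ i ∈ s, g i (w i) := by
            have h := Finset.sum_le_sum h2
            rw [Finset.sum_sub_distrib, ← Finset.sum_mul] at h
            exact h
          have hDδ : D * δ ≤ ε := by
            calc D * δ ≤ (1+D) * δ := mul_le_mul_of_nonneg_right (by linarith) hδpos.le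
              _ = ε := by rw [hδdef]; field_simp
          calc S - ε ≤ S - D*δ := by linarith
            _ ≤ ∑ i ∈ s, g i (w i) := hsum2
            _ = G z := h1.symm
        have hGzn : G z ≤ ‖G‖ * ‖z‖ :=
          le_trans (le_abs_self _) (by simpa [Real.norm_eq_abs] using G.le_opNorm z)
        have hfin : ‖G‖ * ‖z‖ ≤ ‖G‖ * S^(1/p) :=
          mul_le_mul_of_nonneg_left hznorm (norm_nonneg G)
        linarith
      rcases eq_or_lt_of_le hS0 with hSe | hSpos
      · rw [← hSe]; positivity
      · have hqpow : 0 < S ^ (1/p) := Real.rpow_pos_of_pos hSpos _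
        have hfac : S = S ^ (1/p) * S ^ (1/q) := by
          rw [← Real.rpow_add hSpos, hpq, Real.rpow_one]
        have h1q : S ^ (1/q) ≤ ‖G‖ := by
          have hle : S ^ (1/p) * S ^ (1/q) ≤ S ^ (1/p) * ‖G‖ := by
            calc S ^ (1/p) * S ^ (1/q) = S := hfac.symm
              _ ≤ ‖G‖ * S^(1/p) := hmain
              _ = S ^ (1/p) * ‖G‖ := by ring
          exact (mul_le_mul_iff_right₀ hqpow).mp hle
        calc S = (S ^ (1/q)) ^ q := by
              rw [← Real.rpow_mul hS0, one_div_mul_cancel hq0.ne', Real.rpow_one]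
          _ ≤ ‖G‖ ^ q := Real.rpow_le_rpow (Real.rpow_nonneg hS0 _) h1q hq0.le
    have hgnn : ∀ i, (0:ℝ) ≤ ‖g i‖^q := fun i => Real.rpow_nonneg (norm_nonneg _) _
    have hGsum : Summable (fun i => ‖g i‖^q) := summable_of_sum_le (fun i => hgnn i) claim3a
    set Gq := ∑' i, ‖g i‖^q with hGqdef
    have hGq0 : 0 ≤ Gq := tsum_nonneg hgnn
    have hrep : ∀ z : lp Y pe, HasSum (fun i => g i ((z : ∀ i, Y i) i)) (G z) := by
      intro z
      exact (lp.hasSum_single hpe_ne_top z).mapL G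
    have hz_sum : ∀ z : lp Y pe, Summable (fun i => ‖(z : ∀ i, Y i) i‖ ^ p) := by
      intro z
      have h := (lp.hasSum_norm hpe_pos z).summable
      rwa [hpe_toReal] at h
    have hz_tsum : ∀ z : lp Y pe, (∑' i, ‖(z : ∀ i, Y i) i‖ ^ p) = ‖z‖ ^ p := by
      intro z
      have h := (lp.hasSum_norm hpe_pos z).tsum_eq
      rwa [hpe_toReal] at h
    have hGle : ‖G‖ ≤ Gq^(1/q) := by
      refine ContinuousLinearMap.opNorm_le_bound _ (Real.rpow_nonneg hGq0 _) ?_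
      intro z
      have hmul_sum : Summable (fun i => ‖g i‖ * ‖(z : ∀ i, Y i) i‖) :=
        Real.summable_mul_of_Lp_Lq_of_nonneg hcj.symm (fun i => norm_nonneg _)
          (fun i => norm_nonneg _) hGsum (hz_sum z)
      have habs_sum : Summable (fun i => ‖g i ((z : ∀ i, Y i) i)‖) := by
        apply Summable.of_nonneg_of_le (fun i => norm_nonneg _) _ hmul_sum
        intro i
        exact (g i).le_opNorm _
      calc ‖G z‖ = ‖∑' i, g i ((z : ∀ i, Y i) i)‖ := by rw [(hrep z).tsum_eq]
        _ ≤ ∑' i, ‖g i ((z : ∀ i, Y i) i)‖ := norm_tsum_le_tsum_norm habs_sum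
        _ ≤ ∑' i, ‖g i‖ * ‖(z : ∀ i, Y i) i‖ := by
            refine Summable.tsum_le_tsum ?_ habs_sum hmul_sum
            intro i
            exact (g i).le_opNorm _
        _ ≤ (∑' i, ‖g i‖^q)^(1/q) * (∑' i, ‖(z : ∀ i, Y i) i‖^p)^(1/p) := by
            have h := (Real.inner_le_Lp_mul_Lq_tsum_of_nonneg hcj.symm (fun i => norm_nonneg _)
              (fun i => norm_nonneg _) hGsum (hz_sum z))
            exact h
        _ = Gq^(1/q) * ‖z‖ := by
            rw [hz_tsum z, ← Real.rpow_mul (norm_nonneg z), mul_one_div_cancel hp0.ne',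
              Real.rpow_one]
    have hkey : ∀ s : Finset ℕ,
        A * (∑ i ∈ s, ‖g i‖^q)^(1/q)
          ≤ ‖G.comp U‖ + B * (∑' i : {j : ℕ // j ∉ s}, ‖g (i:ℕ)‖^q)^(1/q) := by
      intro s
      refine le_trans (hRB s g).1 ?_
      have htail0 : (0:ℝ) ≤ (∑' i : {j : ℕ // j ∉ s}, ‖g (i:ℕ)‖^q)^(1/q) :=
        Real.rpow_nonneg (tsum_nonneg fun i => hgnn _) _
      refine ContinuousLinearMap.opNorm_le_bound _ (by positivity) ?_
      intro x
      have hsum_gx_bound : Summable (fun i => ‖g i‖ * ‖Λ i x‖) :=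
        Real.summable_mul_of_Lp_Lq_of_nonneg hcj.symm (fun i => norm_nonneg _)
          (fun i => norm_nonneg _) hGsum (hsummable x)
      have habs : Summable (fun i => ‖g i (Λ i x)‖) := by
        apply Summable.of_nonneg_of_le (fun i => norm_nonneg _) _ hsum_gx_bound
        intro i
        exact (g i).le_opNorm _
      have hsum_gx : Summable (fun i => g i (Λ i x)) := habs.of_norm
      have hGU : (G.comp U) x = ∑' i, g i (Λ i x) := ((hrep (U x)).tsum_eq).symm
      have hsplit : (∑ i ∈ s, opAdj (Λ i) (g i)) x
          = (G.comp U) x - ∑' i : {j : ℕ // j ∉ s}, g (i:ℕ) (Λ (i:ℕ) x) := by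
        have h1 : (∑ i ∈ s, g i (Λ i x)) + ∑' i : {j : ℕ // j ∉ s}, g (i:ℕ) (Λ (i:ℕ) x)
            = ∑' i, g i (Λ i x) := Summable.sum_add_tsum_compl hsum_gx
        have h2 : (∑ i ∈ s, opAdj (Λ i) (g i)) x = ∑ i ∈ s, g i (Λ i x) := by
          rw [ContinuousLinearMap.sum_apply]
          exact Finset.sum_congr rfl fun i _ => rfl
        rw [h2, hGU, ← h1]
        ring
      have hsub1 : Summable (fun i : {j : ℕ // j ∉ s} => ‖g (i:ℕ)‖^q) := hGsum.subtype _
      have hsub2 : Summable (fun i : {j : ℕ // j ∉ s} => ‖Λ (i:ℕ) x‖^p) := (hsummable x).subtype _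
      have hsubabs : Summable (fun i : {j : ℕ // j ∉ s} => ‖g (i:ℕ) (Λ (i:ℕ) x)‖) := habs.subtype _
      have hsubmul : Summable (fun i : {j : ℕ // j ∉ s} => ‖g (i:ℕ)‖ * ‖Λ (i:ℕ) x‖) :=
        hsum_gx_bound.subtype _
      have htailp : (∑' i : {j : ℕ // j ∉ s}, ‖Λ (i:ℕ) x‖^p)^(1/p) ≤ B * ‖x‖ := by
        have h1 : (∑' i : {j : ℕ // j ∉ s}, ‖Λ (i:ℕ) x‖^p) ≤ (B*‖x‖)^p := by
          refine le_trans ?_ (htsum_le x)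
          exact Summable.tsum_subtype_le (fun i => ‖Λ i x‖^p) _ (fun i => hnn x i) (hsummable x)
        have h2 := Real.rpow_le_rpow (tsum_nonneg fun i => hnn x _) h1
          (by positivity : (0:ℝ) ≤ 1/p)
        rwa [← Real.rpow_mul (by positivity : (0:ℝ) ≤ B * ‖x‖), mul_one_div_cancel hp0.ne',
          Real.rpow_one] at h2
      have htail : ‖∑' i : {j : ℕ // j ∉ s}, g (i:ℕ) (Λ (i:ℕ) x)‖
          ≤ (∑' i : {j : ℕ // j ∉ s}, ‖g (i:ℕ)‖^q)^(1/q) * (B * ‖x‖) := by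
        calc ‖∑' i : {j : ℕ // j ∉ s}, g (i:ℕ) (Λ (i:ℕ) x)‖
            ≤ ∑' i : {j : ℕ // j ∉ s}, ‖g (i:ℕ) (Λ (i:ℕ) x)‖ := norm_tsum_le_tsum_norm hsubabs
          _ ≤ ∑' i : {j : ℕ // j ∉ s}, ‖g (i:ℕ)‖ * ‖Λ (i:ℕ) x‖ := by
              refine Summable.tsum_le_tsum ?_ hsubabs hsubmul
              intro i
              exact (g (i:ℕ)).le_opNorm _
          _ ≤ (∑' i : {j : ℕ // j ∉ s}, ‖g (i:ℕ)‖^q)^(1/q)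
                * (∑' i : {j : ℕ // j ∉ s}, ‖Λ (i:ℕ) x‖^p)^(1/p) :=
              (Real.inner_le_Lp_mul_Lq_tsum_of_nonneg hcj.symm (fun i => norm_nonneg _)
                (fun i => norm_nonneg _) hsub1 hsub2)
          _ ≤ (∑' i : {j : ℕ // j ∉ s}, ‖g (i:ℕ)‖^q)^(1/q) * (B * ‖x‖) := by
              refine mul_le_mul_of_nonneg_left htailp ?_
              exact Real.rpow_nonneg (tsum_nonneg fun i => hgnn _) _
      calc ‖(∑ i ∈ s, opAdj (Λ i) (g i)) x‖
          = ‖(G.comp U) x - ∑' i : {j : ℕ // j ∉ s}, g (i:ℕ) (Λ (i:ℕ) x)‖ := by rw [hsplit]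
        _ ≤ ‖(G.comp U) x‖ + ‖∑' i : {j : ℕ // j ∉ s}, g (i:ℕ) (Λ (i:ℕ) x)‖ := norm_sub_le _ _
        _ ≤ ‖G.comp U‖ * ‖x‖ + (∑' i : {j : ℕ // j ∉ s}, ‖g (i:ℕ)‖^q)^(1/q) * (B * ‖x‖) :=
            add_le_add ((G.comp U).le_opNorm x) htail
        _ = (‖G.comp U‖ + B * (∑' i : {j : ℕ // j ∉ s}, ‖g (i:ℕ)‖^q)^(1/q)) * ‖x‖ := by ring
    have hAGU : A * Gq^(1/q) ≤ ‖G.comp U‖ := by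
      have hlim1 : Tendsto (fun s : Finset ℕ => A * (∑ i ∈ s, ‖g i‖^q)^(1/q)) atTop
          (nhds (A * Gq^(1/q))) := by
        have h1 : Tendsto (fun s : Finset ℕ => ∑ i ∈ s, ‖g i‖^q) atTop (nhds Gq) := hGsum.hasSum
        have h2 : ContinuousAt (fun t : ℝ => t^(1/q)) Gq :=
          Real.continuousAt_rpow_const _ _ (Or.inr (by positivity))
        exact (h2.tendsto.comp h1).const_mul A
      have hlim2 : Tendsto (fun s : Finset ℕ =>
            ‖G.comp U‖ + B * (∑' i : {j : ℕ // j ∉ s}, ‖g (i:ℕ)‖^q)^(1/q)) atTop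
          (nhds (‖G.comp U‖ + B * (0:ℝ)^(1/q))) := by
        have h1 := tendsto_tsum_compl_atTop_zero (fun i : ℕ => ‖g i‖^q)
        have h2 : ContinuousAt (fun t : ℝ => t^(1/q)) 0 :=
          Real.continuousAt_rpow_const _ _ (Or.inr (by positivity))
        exact tendsto_const_nhds.add ((h2.tendsto.comp h1).const_mul B)
      have h := le_of_tendsto_of_tendsto' hlim1 hlim2 hkey
      rwa [Real.zero_rpow (one_div_pos.mpr hq0).ne', mul_zero, add_zero] at h
    calc A * ‖G‖ ≤ A * Gq^(1/q) := mul_le_mul_of_nonneg_left hGle hA.le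
      _ ≤ ‖G.comp U‖ := hAGU
  -- Part 4: U is an isomorphism, lower bound
  have hUsurj : Function.Surjective U := surj_of_dual_bound U hA hdual
  have hker : LinearMap.ker (U : X →ₗ[ℝ] lp Y pe) = ⊥ := by
    rw [LinearMap.ker_eq_bot']
    intro x hx
    apply hcomplete
    intro i
    have h0 : (U x : ∀ i, Y i) i = 0 := by
      rw [show U x = 0 from hx]
      simp
    rwa [hU_coe] at h0
  have hrange : LinearMap.range (U : X →ₗ[ℝ] lp Y pe) = ⊤ := LinearMap.range_eq_top.mpr hUsurj
  set E := ContinuousLinearEquiv.ofBijective U hker hrange with hE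
  have hEq : ∀ x, E x = U x := fun x => rfl
  set C := ‖(E.symm : lp Y pe →L[ℝ] X)‖ with hC
  have hC0 : (0:ℝ) ≤ C := norm_nonneg _
  have hlow : ∀ x : X, ‖x‖ ≤ (C+1) * ‖U x‖ := by
    intro x
    have h1 : E.symm (E x) = x := E.symm_apply_apply x
    calc ‖x‖ = ‖E.symm (E x)‖ := by rw [h1]
      _ ≤ C * ‖E x‖ := (E.symm : lp Y pe →L[ℝ] X).le_opNorm _
      _ = C * ‖U x‖ := by rw [hEq]
      _ ≤ (C+1) * ‖U x‖ := by
          have := norm_nonneg (U x)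
          nlinarith
  refine ⟨(C+1)⁻¹, B, by positivity, hB, fun x => ⟨hsummable x, ?_, hupper x⟩⟩
  rw [← hU_norm x]
  rw [inv_mul_le_iff₀ (by positivity : (0:ℝ) < C+1)]
  exact hlow x
end

section
/- Let {Y_i} be reflexive Banach spaces and Λ = {Λ_i ∈ B(X, Y_i)} a pg-frame for X. Then the following are equivalent: (i) Λ is a qg-Riesz basis for X^*; (ii) whenever {g_i} ∈ (Σ_i ⊕ Y_i^*)_{ℓ^q} and Σ_i Λ_i^* g_i = 0, then g_i = 0 for all i; (iii) the range of the analysis operator U_Λ is all of (Σ_i ⊕ Y_i)_{ℓ^p}. -/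
open NormedSpace Filter Topology
open scoped ENNReal NNReal

set_option linter.unusedSectionVars false
set_option linter.unusedVariables false
set_option maxHeartbeats 1000000

section SingleCLM

variable {E : ℕ → Type*} [∀ i, NormedAddCommGroup (E i)] [∀ i, NormedSpace ℝ (E i)]
  {P : ℝ≥0∞} [Fact (1 ≤ P)]

theorem lp_single_add (i : ℕ) (a b : E i) :
    lp.single P i (a + b) = lp.single P i a + lp.single P i b := by
  apply lp.ext
  funext j
  by_cases h : j = i
  · subst h; simp [lp.single_apply_self]
  · simp [lp.single_apply_ne P i _ h]

theorem lp_norm_single' (hP : 0 < P.toReal) (i : ℕ) (a : E i) :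
    ‖lp.single P i a‖ = ‖a‖ := by
  have := lp.norm_single (ENNReal.toReal_pos_iff.1 hP).1 i a
  exact this

/-- `lp.single` as a continuous linear map. -/
noncomputable def lpSingleCLM (P : ℝ≥0∞) [Fact (1 ≤ P)] (hP : 0 < P.toReal) (i : ℕ) :
    E i →L[ℝ] lp E P :=
  LinearMap.mkContinuous
    { toFun := fun a => lp.single P i a
      map_add' := lp_single_add i
      map_smul' := fun c a => by simp [lp.single_smul] }
    1 (fun a => by simp [lp_norm_single' hP])

@[simp] theorem lpSingleCLM_apply (hP : 0 < P.toReal) (i : ℕ) (a : E i) :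
    lpSingleCLM P hP i a = lp.single P i a := rfl

end SingleCLM

theorem exists_near {Z : Type*} [NormedAddCommGroup Z] [NormedSpace ℝ Z]
    (g : Z →L[ℝ] ℝ) {ε : ℝ} (hε : 0 < ε) (hε1 : ε < 1) :
    ∃ y : Z, ‖y‖ ≤ 1 ∧ (1 - ε) * ‖g‖ ≤ g y := by
  rcases eq_or_ne g 0 with rfl | hg
  · exact ⟨0, by simp⟩
  · have hgpos : 0 < ‖g‖ := norm_pos_iff.2 hg
    have hlt : (1 - ε) * ‖g‖ < ‖g‖ := by nlinarith
    obtain ⟨x, hx1, hx2⟩ := g.exists_lt_apply_of_lt_opNorm hlt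
    rcases le_or_gt 0 (g x) with h | h
    · refine ⟨x, hx1.le, ?_⟩
      rw [Real.norm_eq_abs, abs_of_nonneg h] at hx2; linarith
    · refine ⟨-x, by simpa using hx1.le, ?_⟩
      rw [map_neg]
      rw [Real.norm_eq_abs, abs_of_neg h] at hx2; linarith

theorem dual_rep_bound {E : ℕ → Type*} [∀ i, NormedAddCommGroup (E i)]
    [∀ i, NormedSpace ℝ (E i)]
    {p q : ℝ} (hpq : Real.HolderConjugate p q) [Fact (1 ≤ ENNReal.ofReal p)]
    (φ : StrongDual ℝ (lp E (ENNReal.ofReal p))) (g : ∀ i, StrongDual ℝ (E i))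
    (hg : ∀ i (a : E i), g i a = φ (lp.single (ENNReal.ofReal p) i a))
    (s : Finset ℕ) : ∑ i ∈ s, ‖g i‖ ^ q ≤ ‖φ‖ ^ q := by
  have hpt : (ENNReal.ofReal p).toReal = p := ENNReal.toReal_ofReal hpq.nonneg
  set P : ℝ≥0∞ := ENNReal.ofReal p with hPdef
  set S := ∑ i ∈ s, ‖g i‖ ^ q with hS
  have hS0 : 0 ≤ S := Finset.sum_nonneg fun i _ => Real.rpow_nonneg (norm_nonneg _) _
  have key : S ^ (1 / q) ≤ ‖φ‖ := by
    rcases eq_or_lt_of_le hS0 with h0 | hSpos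
    · rw [← h0, Real.zero_rpow (one_div_ne_zero hpq.symm.ne_zero)]
      exact norm_nonneg φ
    · set K := S ^ (1 / q) with hK
      have hKpos : 0 < K := Real.rpow_pos_of_pos hSpos _
      refine le_of_forall_pos_le_add fun δ hδ => ?_
      set ε := min (1/2) (δ / K) with hεdef
      have hε : 0 < ε := lt_min (by norm_num) (div_pos hδ hKpos)
      have hε1 : ε < 1 := lt_of_le_of_lt (min_le_left _ _) (by norm_num)
      choose y hy1 hy2 using fun i => exists_near (g i) hε hε1
      set c : ℕ → ℝ := fun i => ‖g i‖ ^ (q - 1) with hc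
      have hc0 : ∀ i, 0 ≤ c i := fun i => Real.rpow_nonneg (norm_nonneg _) _
      set v : lp E P := ∑ i ∈ s, c i • lp.single P i (y i) with hv
      have hφv : φ v = ∑ i ∈ s, c i * g i (y i) := by
        rw [hv, map_sum]
        refine Finset.sum_congr rfl fun i _ => ?_
        rw [map_smul, smul_eq_mul, ← hg i (y i)]
      have hlow : (1 - ε) * S ≤ φ v := by
        rw [hφv, hS, Finset.mul_sum]
        refine Finset.sum_le_sum fun i _ => ?_
        have h1 : c i * ((1 - ε) * ‖g i‖) ≤ c i * g i (y i) :=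
          mul_le_mul_of_nonneg_left (hy2 i) (hc0 i)
        have h3 : c i * ‖g i‖ = ‖g i‖ ^ q := by
          rcases eq_or_ne (‖g i‖) 0 with h | h
          · rw [h, mul_zero, Real.zero_rpow hpq.symm.ne_zero]
          · rw [hc]
            rw [← Real.rpow_add_one h (q - 1), sub_add_cancel]
        calc (1 - ε) * ‖g i‖ ^ q = c i * ((1 - ε) * ‖g i‖) := by rw [← h3]; ring
          _ ≤ c i * g i (y i) := h1
      have hnv : ‖v‖ ≤ S ^ (1 / p) := by
        have hvsingle : v = ∑ i ∈ s, lp.single P i (c i • y i) := by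
          rw [hv]
          exact Finset.sum_congr rfl fun i _ => (lp.single_smul P i (c i) (y i)).symm
        have hnorm := lp.norm_sum_single (by rw [hpt]; exact hpq.pos)
          (fun i => c i • y i) s
        rw [hpt] at hnorm
        have hvp_le : ‖v‖ ^ p ≤ S := by
          rw [hvsingle, hnorm, hS]
          refine Finset.sum_le_sum fun i _ => ?_
          have hle : ‖c i • y i‖ ≤ c i := by
            rw [norm_smul, Real.norm_eq_abs, abs_of_nonneg (hc0 i)]
            exact mul_le_of_le_one_right (hc0 i) (hy1 i)
          calc ‖c i • y i‖ ^ p ≤ (c i) ^ p :=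
                Real.rpow_le_rpow (norm_nonneg _) hle hpq.nonneg
            _ = ‖g i‖ ^ q := by
                show (‖g i‖ ^ (q - 1)) ^ p = ‖g i‖ ^ q
                rw [← Real.rpow_mul (norm_nonneg _), hpq.symm.sub_one_mul_conj]
        have h1 : (‖v‖ ^ p) ^ (1 / p) = ‖v‖ := by
          rw [← Real.rpow_mul (norm_nonneg v), mul_one_div_cancel hpq.ne_zero,
            Real.rpow_one]
        rw [← h1]
        exact Real.rpow_le_rpow (Real.rpow_nonneg (norm_nonneg v) p) hvp_le
          (one_div_nonneg.2 hpq.nonneg)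
      have hup : φ v ≤ ‖φ‖ * S ^ (1 / p) :=
        le_trans (le_trans (le_abs_self _) (by rw [← Real.norm_eq_abs]; exact φ.le_opNorm v))
          (mul_le_mul_of_nonneg_left hnv (norm_nonneg φ))
      have hsplit : S = S ^ (1 / p) * K := by
        rw [hK, ← Real.rpow_add hSpos]
        rw [show (1:ℝ)/p + 1/q = 1 by
          rw [one_div, one_div]; exact hpq.inv_add_inv_eq_one]
        exact (Real.rpow_one S).symm
      have hp1 : 0 < S ^ (1 / p) := Real.rpow_pos_of_pos hSpos _
      have hmain : (1 - ε) * K ≤ ‖φ‖ := by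
        have h2 : ((1 - ε) * K) * S ^ (1 / p) ≤ ‖φ‖ * S ^ (1 / p) := by
          calc ((1 - ε) * K) * S ^ (1 / p) = (1 - ε) * S := by
                conv_rhs => rw [hsplit]
                ring
            _ ≤ φ v := hlow
            _ ≤ ‖φ‖ * S ^ (1 / p) := hup
        exact le_of_mul_le_mul_right h2 hp1
      have hεK : ε * K ≤ δ := by
        have : ε ≤ δ / K := min_le_right _ _
        calc ε * K ≤ (δ / K) * K := mul_le_mul_of_nonneg_right this hKpos.le
          _ = δ := div_mul_cancel₀ δ hKpos.ne'
      have hKK : (1 - ε) * K = K - ε * K := by ring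
      linarith [hKK ▸ hmain]
  calc S = (S ^ (1 / q)) ^ q := by
        rw [← Real.rpow_mul hS0, one_div_mul_cancel hpq.symm.ne_zero, Real.rpow_one]
    _ ≤ ‖φ‖ ^ q := Real.rpow_le_rpow (Real.rpow_nonneg hS0 _) key hpq.symm.nonneg

section Lq
variable {E : ℕ → Type*} [∀ i, NormedAddCommGroup (E i)] [∀ i, NormedSpace ℝ (E i)]

theorem lq_summable {q : ℝ} (hq : 0 < q) [Fact (1 ≤ ENNReal.ofReal q)]
    (G : lp E (ENNReal.ofReal q)) : Summable (fun i => ‖(G : ∀ i, E i) i‖ ^ q) := by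
  have hqt : (ENNReal.ofReal q).toReal = q := ENNReal.toReal_ofReal hq.le
  have h2 := (memℓp_gen_iff (by rw [hqt]; exact hq)).1 (lp.memℓp G)
  rwa [hqt] at h2

theorem lp_sum_single_coe (P : ℝ≥0∞) [Fact (1 ≤ P)] (s : Finset ℕ) (g : ∀ i, E i) (j : ℕ) :
    ((∑ i ∈ s, lp.single P i (g i) : lp E P) : ∀ i, E i) j = if j ∈ s then g j else 0 := by
  simp only [lp.coeFn_sum, Finset.sum_apply, lp.single_apply, Finset.sum_dite_eq, Finset.sum_pi_single]

theorem lp_norm_sum_single_rpow {q : ℝ} (hq : 0 < q) [Fact (1 ≤ ENNReal.ofReal q)]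
    (s : Finset ℕ) (g : ∀ i, E i) :
    ‖(∑ i ∈ s, lp.single (ENNReal.ofReal q) i (g i) : lp E (ENNReal.ofReal q))‖ =
      (∑ i ∈ s, ‖g i‖ ^ q) ^ (1 / q) := by
  have hqt : (ENNReal.ofReal q).toReal = q := ENNReal.toReal_ofReal hq.le
  have h := lp.norm_sum_single (p := ENNReal.ofReal q) (by rw [hqt]; exact hq) g s
  rw [hqt] at h
  rw [← h, ← Real.rpow_mul (norm_nonneg _), mul_one_div_cancel hq.ne', Real.rpow_one]

theorem lp_dual_hasSum {P : ℝ≥0∞} [Fact (1 ≤ P)] (hP : P ≠ ⊤)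
    (φ : StrongDual ℝ (lp E P)) (v : lp E P) :
    HasSum (fun i => φ (lp.single P i ((v : ∀ i, E i) i))) (φ v) :=
  (lp.hasSum_single hP v).mapL φ

end Lq

/-- Separation: a closed proper subspace is annihilated by a functional not vanishing at `v`. -/
theorem exists_dual_annihilator {W : Type*} [NormedAddCommGroup W] [NormedSpace ℝ W]
    (M : Submodule ℝ W) (hM : IsClosed (M : Set W)) {v : W} (hv : v ∉ M) :
    ∃ φ : StrongDual ℝ W, φ v ≠ 0 ∧ ∀ m ∈ M, φ m = 0 := by
  haveI : IsClosed (M : Set W) := hM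
  have hmkv : (Submodule.Quotient.mk v : W ⧸ M) ≠ 0 := by
    simpa [Submodule.Quotient.mk_eq_zero] using hv
  obtain ⟨ψ, hψ1, hψ2⟩ := exists_dual_vector ℝ (Submodule.Quotient.mk v : W ⧸ M) (norm_ne_zero_iff.2 hmkv)
  have hcont : ∃ πc : W →L[ℝ] W ⧸ M, ∀ x, πc x = Submodule.Quotient.mk x := by
    refine ⟨LinearMap.mkContinuous M.mkQ 1 (fun x => ?_), fun x => rfl⟩
    simpa [one_mul] using Submodule.Quotient.norm_mk_le M x
  obtain ⟨πc, hπc⟩ := hcont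
  refine ⟨ψ.comp πc, ?_, ?_⟩
  · simp only [ContinuousLinearMap.comp_apply, hπc]
    rw [hψ2]
    simpa using hmkv
  · intro m hm
    simp only [ContinuousLinearMap.comp_apply, hπc]
    have : (Submodule.Quotient.mk m : W ⧸ M) = 0 := (Submodule.Quotient.mk_eq_zero M).2 hm
    rw [this, map_zero]

section Frame

variable {X : Type*} [NormedAddCommGroup X] [NormedSpace ℝ X]
  {Y : ℕ → Type*} [∀ i, NormedAddCommGroup (Y i)] [∀ i, NormedSpace ℝ (Y i)]

/-- The analysis operator of a pg-frame. -/
noncomputable def Uop (p : ℝ) [Fact (1 ≤ ENNReal.ofReal p)] (hp : 0 < p)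
    (Λ : ∀ i, X →L[ℝ] Y i) (B : ℝ)
    (hmem : ∀ x, Memℓp (fun i => Λ i x) (ENNReal.ofReal p))
    (hbd : ∀ x : X, (∑' i, ‖Λ i x‖ ^ p) ^ (1 / p) ≤ B * ‖x‖) :
    X →L[ℝ] lp Y (ENNReal.ofReal p) :=
  LinearMap.mkContinuous
    { toFun := fun x => ⟨fun i => Λ i x, hmem x⟩
      map_add' := fun x y => by ext i; simp; rfl
      map_smul' := fun c x => by ext i; simp }
    B (fun x => by
      have hpt : (ENNReal.ofReal p).toReal = p := ENNReal.toReal_ofReal hp.le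
      rw [lp.norm_eq_tsum_rpow (by rw [hpt]; exact hp)]
      simp only [hpt]
      exact hbd x)

theorem Uop_apply (p : ℝ) [Fact (1 ≤ ENNReal.ofReal p)] (hp : 0 < p)
    (Λ : ∀ i, X →L[ℝ] Y i) (B : ℝ) (hmem) (hbd) (x : X) (i : ℕ) :
    (Uop p hp Λ B hmem hbd x : ∀ i, Y i) i = Λ i x := rfl

theorem Uop_norm (p : ℝ) [Fact (1 ≤ ENNReal.ofReal p)] (hp : 0 < p)
    (Λ : ∀ i, X →L[ℝ] Y i) (B : ℝ) (hmem) (hbd) (x : X) :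
    ‖Uop p hp Λ B hmem hbd x‖ = (∑' i, ‖Λ i x‖ ^ p) ^ (1 / p) := by
  have hpt : (ENNReal.ofReal p).toReal = p := ENNReal.toReal_ofReal hp.le
  rw [lp.norm_eq_tsum_rpow (by rw [hpt]; exact hp)]
  simp only [hpt]
  rfl

/-- Hölder bound for finite partial sums of the synthesis series. -/
theorem sum_opAdj_le {p q : ℝ} (hpq : Real.HolderConjugate p q)
    (Λ : ∀ i, X →L[ℝ] Y i) {B : ℝ} (hB : 0 ≤ B)
    (hsummable : ∀ x : X, Summable (fun i => ‖Λ i x‖ ^ p))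
    (hbd : ∀ x : X, (∑' i, ‖Λ i x‖ ^ p) ^ (1 / p) ≤ B * ‖x‖)
    (s : Finset ℕ) (g : ∀ i, StrongDual ℝ (Y i)) :
    ‖∑ i ∈ s, (ContinuousLinearMap.compL ℝ X (Y i) ℝ).flip (Λ i) (g i)‖ ≤
      B * (∑ i ∈ s, ‖g i‖ ^ q) ^ (1 / q) := by
  have hq0 : 0 ≤ (∑ i ∈ s, ‖g i‖ ^ q) ^ (1 / q) :=
    Real.rpow_nonneg (Finset.sum_nonneg fun i _ => Real.rpow_nonneg (norm_nonneg _) _) _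
  rw [mul_comm]
  refine ContinuousLinearMap.opNorm_le_bound _ (mul_nonneg hq0 hB) fun x => ?_
  have h1 : ‖(∑ i ∈ s, (ContinuousLinearMap.compL ℝ X (Y i) ℝ).flip (Λ i) (g i)) x‖
      ≤ ∑ i ∈ s, ‖g i‖ * ‖Λ i x‖ := by
    rw [ContinuousLinearMap.sum_apply]
    refine (norm_sum_le _ _).trans (Finset.sum_le_sum fun i _ => ?_)
    exact (g i).le_opNorm (Λ i x)
  have h2 : ∑ i ∈ s, ‖g i‖ * ‖Λ i x‖ ≤
      (∑ i ∈ s, ‖g i‖ ^ q) ^ (1 / q) * (∑ i ∈ s, ‖Λ i x‖ ^ p) ^ (1 / p) := by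
    have := Real.inner_le_Lp_mul_Lq s (fun i => ‖g i‖) (fun i => ‖Λ i x‖) hpq.symm
    simpa using this
  have h3 : (∑ i ∈ s, ‖Λ i x‖ ^ p) ^ (1 / p) ≤ B * ‖x‖ := by
    refine le_trans ?_ (hbd x)
    refine Real.rpow_le_rpow (Finset.sum_nonneg fun i _ => Real.rpow_nonneg (norm_nonneg _) _)
      ?_ hpq.one_div_nonneg
    exact Summable.sum_le_tsum s (fun i _ => Real.rpow_nonneg (norm_nonneg _) _) (hsummable x)
  calc ‖(∑ i ∈ s, (ContinuousLinearMap.compL ℝ X (Y i) ℝ).flip (Λ i) (g i)) x‖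
      ≤ (∑ i ∈ s, ‖g i‖ ^ q) ^ (1 / q) * (∑ i ∈ s, ‖Λ i x‖ ^ p) ^ (1 / p) := h1.trans h2
    _ ≤ (∑ i ∈ s, ‖g i‖ ^ q) ^ (1 / q) * (B * ‖x‖) :=
        mul_le_mul_of_nonneg_left h3 hq0
    _ = (∑ i ∈ s, ‖g i‖ ^ q) ^ (1 / q) * B * ‖x‖ := by ring

/-- Summability of the synthesis series for `ℓ^q` coefficients. -/
theorem summable_opAdj [CompleteSpace X] {p q : ℝ} (hpq : Real.HolderConjugate p q)
    (Λ : ∀ i, X →L[ℝ] Y i) {B : ℝ} (hB : 0 < B)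
    (hsummable : ∀ x : X, Summable (fun i => ‖Λ i x‖ ^ p))
    (hbd : ∀ x : X, (∑' i, ‖Λ i x‖ ^ p) ^ (1 / p) ≤ B * ‖x‖)
    (g : ∀ i, StrongDual ℝ (Y i)) (hgq : Summable fun i => ‖g i‖ ^ q) :
    Summable (fun i => (ContinuousLinearMap.compL ℝ X (Y i) ℝ).flip (Λ i) (g i)) := by
  rw [summable_iff_vanishing_norm]
  intro ε hε
  have hδ : (0:ℝ) < (ε / B) ^ q := Real.rpow_pos_of_pos (div_pos hε hB) _
  obtain ⟨s, hs⟩ := summable_iff_vanishing_norm.1 hgq _ hδ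
  refine ⟨s, fun t ht => ?_⟩
  have h1 : ∑ i ∈ t, ‖g i‖ ^ q < (ε / B) ^ q :=
    lt_of_le_of_lt (le_abs_self _) (by simpa [Real.norm_eq_abs] using hs t ht)
  have h2 : (∑ i ∈ t, ‖g i‖ ^ q) ^ (1 / q) < ε / B := by
    have := Real.rpow_lt_rpow (Finset.sum_nonneg fun i _ => Real.rpow_nonneg (norm_nonneg _) _)
      h1 (one_div_pos.2 hpq.symm.pos)
    rwa [← Real.rpow_mul (div_pos hε hB).le, mul_one_div_cancel hpq.symm.ne_zero,
      Real.rpow_one] at this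
  calc ‖∑ i ∈ t, (ContinuousLinearMap.compL ℝ X (Y i) ℝ).flip (Λ i) (g i)‖
      ≤ B * (∑ i ∈ t, ‖g i‖ ^ q) ^ (1 / q) := sum_opAdj_le hpq Λ hB.le hsummable hbd t g
    _ < B * (ε / B) := by exact (mul_lt_mul_iff_right₀ hB).2 h2
    _ = ε := by field_simp

/-- Evaluating the synthesis series. -/
theorem tsum_opAdj_apply {g : ∀ i, StrongDual ℝ (Y i)} {Λ : ∀ i, X →L[ℝ] Y i}
    (hsum : Summable (fun i => (ContinuousLinearMap.compL ℝ X (Y i) ℝ).flip (Λ i) (g i)))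
    (x : X) :
    (∑' i, (ContinuousLinearMap.compL ℝ X (Y i) ℝ).flip (Λ i) (g i)) x
      = ∑' i, g i (Λ i x) := by
  have h := hsum.hasSum.mapL (ContinuousLinearMap.apply ℝ ℝ x)
  simpa using h.tsum_eq.symm

variable [CompleteSpace X]

/-- The synthesis operator on `ℓ^q` of the duals. -/
noncomputable def synthOp {p q : ℝ} (hpq : Real.HolderConjugate p q)
    [Fact (1 ≤ ENNReal.ofReal q)]
    (Λ : ∀ i, X →L[ℝ] Y i) {B : ℝ} (hB : 0 < B)
    (hsummable : ∀ x : X, Summable (fun i => ‖Λ i x‖ ^ p))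
    (hbd : ∀ x : X, (∑' i, ‖Λ i x‖ ^ p) ^ (1 / p) ≤ B * ‖x‖) :
    lp (fun i => StrongDual ℝ (Y i)) (ENNReal.ofReal q) →L[ℝ] StrongDual ℝ X :=
  LinearMap.mkContinuous
    { toFun := fun G => ∑' i,
        (ContinuousLinearMap.compL ℝ X (Y i) ℝ).flip (Λ i) ((G : ∀ i, StrongDual ℝ (Y i)) i)
      map_add' := fun G H => by
        have hG := summable_opAdj hpq Λ hB hsummable hbd _ (lq_summable hpq.symm.pos G)
        have hH := summable_opAdj hpq Λ hB hsummable hbd _ (lq_summable hpq.symm.pos H)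
        simp only [lp.coeFn_add, Pi.add_apply, map_add]
        exact Summable.tsum_add hG hH
      map_smul' := fun c G => by
        have hG := summable_opAdj hpq Λ hB hsummable hbd _ (lq_summable hpq.symm.pos G)
        simp only [lp.coeFn_smul, Pi.smul_apply, map_smul, RingHom.id_apply]
        exact Summable.tsum_const_smul c hG }
    B (fun G => by
      have hqt : (ENNReal.ofReal q).toReal = q := ENNReal.toReal_ofReal hpq.symm.nonneg
      have hsum := summable_opAdj hpq Λ hB hsummable hbd _ (lq_summable hpq.symm.pos G)
      have hb : ∀ s : Finset ℕ,
          ‖∑ i ∈ s, (ContinuousLinearMap.compL ℝ X (Y i) ℝ).flip (Λ i)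
            ((G : ∀ i, StrongDual ℝ (Y i)) i)‖ ≤ B * ‖G‖ := fun s => by
        refine (sum_opAdj_le hpq Λ hB.le hsummable hbd s _).trans ?_
        have h1 : (∑ i ∈ s, ‖(G : ∀ i, StrongDual ℝ (Y i)) i‖ ^ q) ^ (1 / q) ≤ ‖G‖ := by
          rw [lp.norm_eq_tsum_rpow (by rw [hqt]; exact hpq.symm.pos) G]
          simp only [hqt]
          refine Real.rpow_le_rpow
            (Finset.sum_nonneg fun i _ => Real.rpow_nonneg (norm_nonneg _) _)
            (Summable.sum_le_tsum s (fun i _ => Real.rpow_nonneg (norm_nonneg _) _)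
              (lq_summable hpq.symm.pos G))
            hpq.symm.one_div_nonneg
        exact mul_le_mul_of_nonneg_left h1 hB.le
      exact le_of_tendsto ((continuous_norm.tendsto _).comp hsum.hasSum)
        (Filter.Eventually.of_forall hb))

theorem synthOp_apply {p q : ℝ} (hpq : Real.HolderConjugate p q) [Fact (1 ≤ ENNReal.ofReal q)]
    (Λ : ∀ i, X →L[ℝ] Y i) {B : ℝ} (hB : 0 < B) (hsummable) (hbd)
    (G : lp (fun i => StrongDual ℝ (Y i)) (ENNReal.ofReal q)) :
    synthOp hpq Λ hB hsummable hbd G = ∑' i,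
      (ContinuousLinearMap.compL ℝ X (Y i) ℝ).flip (Λ i) ((G : ∀ i, StrongDual ℝ (Y i)) i) := rfl

end Frame
/-- for a pg-frame `Λ` for `X` with reflexive `Yᵢ`, the following are
equivalent: (i) `Λ` is a qg-Riesz basis for `X*`; (ii) the synthesis operator is
injective (`Σᵢ Λᵢ* gᵢ = 0` with `{gᵢ} ∈ ℓᑫ` forces `gᵢ = 0`); (iii) the range of the
analysis operator `U_Λ` is all of `(Σᵢ ⊕ Yᵢ)_{ℓᵖ}`. -/
theorem pgFrame_tfae_qgRiesz
    {X : Type*} [NormedAddCommGroup X] [NormedSpace ℝ X] [CompleteSpace X]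
    {Y : ℕ → Type*} [∀ i, NormedAddCommGroup (Y i)] [∀ i, NormedSpace ℝ (Y i)]
    [∀ i, CompleteSpace (Y i)]
    (p q : ℝ) (hp : 1 < p) (hpq : 1 / p + 1 / q = 1)
    [Fact (1 ≤ ENNReal.ofReal p)]
    (Λ : ∀ i, X →L[ℝ] Y i) (A B : ℝ) (hA : 0 < A) (hB : 0 < B)
    (hframe : ∀ x : X, Summable (fun i => ‖Λ i x‖ ^ p) ∧
      A * ‖x‖ ≤ (∑' i, ‖Λ i x‖ ^ p) ^ (1 / p) ∧
      (∑' i, ‖Λ i x‖ ^ p) ^ (1 / p) ≤ B * ‖x‖)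
    (hrefl : ∀ i, Function.Surjective (inclusionInDoubleDual ℝ (Y i))) :
    -- (i) ↔ (ii) and (ii) ↔ (iii)
    (((∀ x : X, (∀ i, Λ i x = 0) → x = 0) ∧
        ∃ A' B' : ℝ, 0 < A' ∧ 0 < B' ∧
          ∀ (s : Finset ℕ) (g : ∀ i, StrongDual ℝ (Y i)),
            A' * (∑ i ∈ s, ‖g i‖ ^ q) ^ (1 / q) ≤ ‖∑ i ∈ s, opAdj (Λ i) (g i)‖ ∧
            ‖∑ i ∈ s, opAdj (Λ i) (g i)‖ ≤ B' * (∑ i ∈ s, ‖g i‖ ^ q) ^ (1 / q)) ↔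
      (∀ g : ∀ i, StrongDual ℝ (Y i), Summable (fun i => ‖g i‖ ^ q) →
        (∑' i, opAdj (Λ i) (g i)) = 0 → ∀ i, g i = 0)) ∧
    ((∀ g : ∀ i, StrongDual ℝ (Y i), Summable (fun i => ‖g i‖ ^ q) →
        (∑' i, opAdj (Λ i) (g i)) = 0 → ∀ i, g i = 0) ↔
      (∀ v : lp Y (ENNReal.ofReal p), ∃ x : X, ∀ i, Λ i x = (v : ∀ i, Y i) i)) := by
  classical
  have hpq' : Real.HolderConjugate p q := Real.holderConjugate_iff.2 ⟨hp, by rw [← one_div, ← one_div]; exact hpq⟩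
  have hq1 : 1 < q := hpq'.symm.lt
  have hqpos : 0 < q := hpq'.symm.pos
  have hpt : (ENNReal.ofReal p).toReal = p := ENNReal.toReal_ofReal hpq'.nonneg
  have hqt : (ENNReal.ofReal q).toReal = q := ENNReal.toReal_ofReal hpq'.symm.nonneg
  haveI hfq : Fact (1 ≤ ENNReal.ofReal q) := ⟨by
    rw [← ENNReal.ofReal_one]; exact ENNReal.ofReal_le_ofReal hq1.le⟩
  have hPtop : (ENNReal.ofReal p : ℝ≥0∞) ≠ ⊤ := ENNReal.ofReal_ne_top
  have hptP : 0 < (ENNReal.ofReal p).toReal := by rw [hpt]; exact hpq'.pos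
  have hsummable : ∀ x : X, Summable (fun i => ‖Λ i x‖ ^ p) := fun x => (hframe x).1
  have hlowf : ∀ x : X, A * ‖x‖ ≤ (∑' i, ‖Λ i x‖ ^ p) ^ (1 / p) := fun x => (hframe x).2.1
  have hbd : ∀ x : X, (∑' i, ‖Λ i x‖ ^ p) ^ (1 / p) ≤ B * ‖x‖ := fun x => (hframe x).2.2
  have hmem : ∀ x, Memℓp (fun i => Λ i x) (ENNReal.ofReal p) := fun x =>
    memℓp_gen (by rw [hpt]; exact hsummable x)
  set U : X →L[ℝ] lp Y (ENNReal.ofReal p) := Uop p hpq'.pos Λ B hmem hbd with hUdef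
  have hUlow : ∀ x, A * ‖x‖ ≤ ‖U x‖ := fun x => by
    rw [hUdef, Uop_norm]; exact hlowf x
  have hUinj : Function.Injective U := by
    intro x y hxy
    have h0 : U (x - y) = 0 := by rw [map_sub, hxy, sub_self]
    have h1 := hUlow (x - y)
    rw [h0, norm_zero] at h1
    have h2 : ‖x - y‖ ≤ 0 := by nlinarith
    have h3 := le_antisymm h2 (norm_nonneg _)
    rwa [norm_eq_zero, sub_eq_zero] at h3
  set M : Submodule ℝ (lp Y (ENNReal.ofReal p)) := LinearMap.range (U : X →ₗ[ℝ] lp Y (ENNReal.ofReal p)) with hMdef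
  have hMclosed : IsClosed (M : Set (lp Y (ENNReal.ofReal p))) := by
    have hA' : AntilipschitzWith (⟨A, hA.le⟩ : ℝ≥0)⁻¹ U := by
      refine ContinuousLinearMap.antilipschitz_of_bound U fun x => ?_
      change ‖x‖ ≤ A⁻¹ * ‖U x‖
      calc ‖x‖ = A⁻¹ * (A * ‖x‖) := by field_simp
        _ ≤ A⁻¹ * ‖U x‖ := mul_le_mul_of_nonneg_left (hUlow x) (inv_nonneg.2 hA.le)
    have hcl := hA'.isClosed_range U.uniformContinuous
    rw [hMdef]
    rw [show ((LinearMap.range (U : X →ₗ[ℝ] lp Y (ENNReal.ofReal p)) : Submodule ℝ (lp Y (ENNReal.ofReal p))) :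
      Set (lp Y (ENNReal.ofReal p))) = Set.range U from LinearMap.coe_range (U : X →ₗ[ℝ] lp Y (ENNReal.ofReal p))]
    exact hcl
  simp only [opAdj]
  refine ⟨⟨?_, ?_⟩, ?_, ?_⟩
  · -- (i) → (ii)
    rintro ⟨-, A', B', hA', hB', hbounds⟩ g hgq hzero i
    have hsum := summable_opAdj hpq' Λ hB hsummable hbd g hgq
    have ht2 : Tendsto (fun s : Finset ℕ =>
        ‖∑ i ∈ s, (ContinuousLinearMap.compL ℝ X (Y i) ℝ).flip (Λ i) (g i)‖) atTop (𝓝 0) := by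
      have h := hsum.hasSum
      rw [hzero] at h
      have h' := (continuous_norm.tendsto (0 : StrongDual ℝ X)).comp h
      simpa [Function.comp_def] using h'
    have ht1 : Tendsto (fun s : Finset ℕ => A' * (∑ i ∈ s, ‖g i‖ ^ q) ^ (1/q)) atTop
        (𝓝 (A' * (∑' i, ‖g i‖ ^ q) ^ (1/q))) :=
      (hgq.hasSum.rpow_const (Or.inr (one_div_nonneg.2 hqpos.le))).const_mul A'
    have hle := le_of_tendsto_of_tendsto' ht1 ht2 (fun s => (hbounds s g).1)
    have ht0 : 0 ≤ (∑' i, ‖g i‖ ^ q) ^ (1/q) :=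
      Real.rpow_nonneg (tsum_nonneg fun i => Real.rpow_nonneg (norm_nonneg _) _) _
    have hteq : (∑' i, ‖g i‖ ^ q) ^ (1/q) = 0 := le_antisymm (by nlinarith) ht0
    have hts : (∑' i, ‖g i‖ ^ q) = 0 :=
      (Real.rpow_eq_zero (tsum_nonneg fun i => Real.rpow_nonneg (norm_nonneg _) _)
        (one_div_ne_zero hpq'.symm.ne_zero)).1 hteq
    have hterm : ‖g i‖ ^ q = 0 :=
      le_antisymm (hts ▸ Summable.le_tsum hgq i fun j _ => Real.rpow_nonneg (norm_nonneg _) _)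
        (Real.rpow_nonneg (norm_nonneg _) _)
    have hni : ‖g i‖ = 0 := (Real.rpow_eq_zero (norm_nonneg _) hpq'.symm.ne_zero).1 hterm
    exact norm_eq_zero.1 hni
  · -- (ii) → (i)
    intro h2
    refine ⟨?_, ?_⟩
    · intro x hx
      have h0 : (∑' i, ‖Λ i x‖ ^ p) = 0 := by
        have hz : ∀ i, ‖Λ i x‖ ^ p = 0 := fun i => by
          rw [hx i, norm_zero, Real.zero_rpow hpq'.ne_zero]
        rw [tsum_congr hz, tsum_zero]
      have h1 := hlowf x
      rw [h0, Real.zero_rpow (one_div_ne_zero hpq'.ne_zero)] at h1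
      have h2' : ‖x‖ ≤ 0 := by nlinarith
      have h3 := le_antisymm h2' (norm_nonneg _)
      rwa [norm_eq_zero] at h3
    · set T := synthOp hpq' Λ hB hsummable hbd with hTdef
      have hTinj : LinearMap.ker (T : lp (fun i => StrongDual ℝ (Y i)) (ENNReal.ofReal q) →ₗ[ℝ] StrongDual ℝ X) = ⊥ := by
        rw [LinearMap.ker_eq_bot']
        intro G hG
        have hzero : (∑' i, (ContinuousLinearMap.compL ℝ X (Y i) ℝ).flip (Λ i)
            ((G : ∀ i, StrongDual ℝ (Y i)) i)) = 0 := by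
          rw [← synthOp_apply hpq' Λ hB hsummable hbd G, ← hTdef]; exact hG
        have hz := h2 (fun i => (G : ∀ i, StrongDual ℝ (Y i)) i) (lq_summable hqpos G) hzero
        apply Subtype.ext
        funext i
        exact hz i
      have hTsurj : Function.Surjective T := by
        intro f
        haveI : CompleteSpace M := hMclosed.completeSpace_coe
        have hUmem : ∀ x, U x ∈ M := fun x => LinearMap.mem_range_self _ x
        have hker : LinearMap.ker ((U.codRestrict M hUmem : X →L[ℝ] M) : X →ₗ[ℝ] M) = ⊥ := by
          rw [ContinuousLinearMap.ker_codRestrict]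
          exact LinearMap.ker_eq_bot.2 hUinj
        have hrange : LinearMap.range ((U.codRestrict M hUmem : X →L[ℝ] M) : X →ₗ[ℝ] M) = ⊤ := by
          rw [LinearMap.range_eq_top]
          rintro ⟨m, hm⟩
          obtain ⟨x, hx⟩ := hm
          exact ⟨x, Subtype.ext hx⟩
        let e : X ≃L[ℝ] M := ContinuousLinearEquiv.ofBijective (U.codRestrict M hUmem)
          hker hrange
        let φ₀ : M →L[ℝ] ℝ := f.comp (e.symm : M →L[ℝ] X)
        obtain ⟨φ, hφext, -⟩ := exists_extension_norm_eq M φ₀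
        set g : ∀ i, StrongDual ℝ (Y i) :=
          fun i => φ.comp (lpSingleCLM (ENNReal.ofReal p) hptP i) with hgdef
        have hg : ∀ i (a : Y i), g i a = φ (lp.single (ENNReal.ofReal p) i a) :=
          fun i a => rfl
        have hgs : Summable (fun i => ‖g i‖ ^ q) :=
          summable_of_sum_le (fun i => Real.rpow_nonneg (norm_nonneg _) _)
            (dual_rep_bound hpq' φ g hg)
        refine ⟨⟨g, memℓp_gen (by rw [hqt]; exact hgs)⟩, ?_⟩
        ext x
        have hsum := summable_opAdj hpq' Λ hB hsummable hbd g hgs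
        have hTx : T ⟨g, memℓp_gen (by rw [hqt]; exact hgs)⟩ x
            = ∑' i, g i (Λ i x) := by
          rw [hTdef, synthOp_apply hpq' Λ hB hsummable hbd]
          exact tsum_opAdj_apply hsum x
        rw [hTx]
        have hrep := lp_dual_hasSum hPtop φ (U x)
        have hφU : (∑' i, g i (Λ i x)) = φ (U x) := hrep.tsum_eq
        rw [hφU]
        have h1 : φ ((U.codRestrict M hUmem) x : lp Y (ENNReal.ofReal p))
            = φ₀ ((U.codRestrict M hUmem) x) := hφext _
        have h3 : e.symm ((U.codRestrict M hUmem) x) = x := by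
          have he : (U.codRestrict M hUmem) x = e x := rfl
          rw [he, ContinuousLinearEquiv.symm_apply_apply]
        calc φ (U x) = φ₀ ((U.codRestrict M hUmem) x) := h1
          _ = f (e.symm ((U.codRestrict M hUmem) x)) := rfl
          _ = f x := by rw [h3]
      have hTrange : LinearMap.range (T : lp (fun i => StrongDual ℝ (Y i)) (ENNReal.ofReal q) →ₗ[ℝ] StrongDual ℝ X) = ⊤ := LinearMap.range_eq_top.2 hTsurj
      let Te := ContinuousLinearEquiv.ofBijective T hTinj hTrange
      set C := ‖(Te.symm : StrongDual ℝ X →L[ℝ] lp (fun i => StrongDual ℝ (Y i)) (ENNReal.ofReal q))‖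
        with hC
      have hC1 : (0:ℝ) < max C 1 := lt_of_lt_of_le one_pos (le_max_right _ _)
      refine ⟨(max C 1)⁻¹, B, inv_pos.2 hC1, hB, fun s g => ⟨?_, ?_⟩⟩
      · set G : lp (fun i => StrongDual ℝ (Y i)) (ENNReal.ofReal q) :=
          ∑ i ∈ s, lp.single (ENNReal.ofReal q) i (g i) with hG
        have hGnorm : ‖G‖ = (∑ i ∈ s, ‖g i‖ ^ q) ^ (1/q) :=
          lp_norm_sum_single_rpow hqpos s g
        have hTG : T G = ∑ i ∈ s, (ContinuousLinearMap.compL ℝ X (Y i) ℝ).flip (Λ i) (g i) := by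
          rw [hTdef, synthOp_apply hpq' Λ hB hsummable hbd]
          rw [tsum_eq_sum (s := s) (fun i hi => by
            rw [hG, lp_sum_single_coe]
            simp [hi])]
          refine Finset.sum_congr rfl fun i hi => ?_
          rw [hG, lp_sum_single_coe]
          simp [hi]
        have h1 : ‖G‖ ≤ max C 1 * ‖T G‖ := by
          have h2' : Te.symm (Te G) = G := Te.symm_apply_apply G
          have h3 : (Te G : StrongDual ℝ X) = T G := rfl
          calc ‖G‖ = ‖Te.symm (Te G)‖ := by rw [h2']
            _ ≤ C * ‖Te G‖ :=
              (Te.symm : StrongDual ℝ X →L[ℝ] lp (fun i => StrongDual ℝ (Y i))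
                (ENNReal.ofReal q)).le_opNorm _
            _ = C * ‖T G‖ := by rw [h3]
            _ ≤ max C 1 * ‖T G‖ :=
              mul_le_mul_of_nonneg_right (le_max_left _ _) (norm_nonneg _)
        have hfinal : (max C 1)⁻¹ * ‖G‖ ≤ ‖T G‖ := by
          calc (max C 1)⁻¹ * ‖G‖ ≤ (max C 1)⁻¹ * (max C 1 * ‖T G‖) :=
              mul_le_mul_of_nonneg_left h1 (inv_nonneg.2 hC1.le)
            _ = ‖T G‖ := by field_simp
        rw [hGnorm, hTG] at hfinal
        exact hfinal
      · exact sum_opAdj_le hpq' Λ hB.le hsummable hbd s g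
  · -- (ii) → (iii)
    intro h2 v
    have hvM : v ∈ M := by
      by_contra hvnot
      obtain ⟨φ, hφv, hφM⟩ := exists_dual_annihilator M hMclosed hvnot
      set g : ∀ i, StrongDual ℝ (Y i) :=
        fun i => φ.comp (lpSingleCLM (ENNReal.ofReal p) hptP i) with hgdef
      have hg : ∀ i (a : Y i), g i a = φ (lp.single (ENNReal.ofReal p) i a) := fun i a => rfl
      have hgs : Summable (fun i => ‖g i‖ ^ q) :=
        summable_of_sum_le (fun i => Real.rpow_nonneg (norm_nonneg _) _)
          (dual_rep_bound hpq' φ g hg)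
      have hsum := summable_opAdj hpq' Λ hB hsummable hbd g hgs
      have hTzero : (∑' i, (ContinuousLinearMap.compL ℝ X (Y i) ℝ).flip (Λ i) (g i)) = 0 := by
        ext x
        rw [tsum_opAdj_apply hsum x, ContinuousLinearMap.zero_apply]
        have hrep := lp_dual_hasSum hPtop φ (U x)
        have h0 : φ (U x) = 0 := hφM (U x) (LinearMap.mem_range_self _ x)
        calc (∑' i, g i (Λ i x)) = φ (U x) := hrep.tsum_eq
          _ = 0 := h0
      have hgzero := h2 g hgs hTzero
      have hv0 : φ v = 0 := by
        have hrep := lp_dual_hasSum hPtop φ v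
        have hzz : ∀ i, φ (lp.single (ENNReal.ofReal p) i ((v : ∀ i, Y i) i)) = 0 := fun i => by
          rw [← hg i, hgzero i]
          rfl
        rw [← hrep.tsum_eq, tsum_congr hzz, tsum_zero]
      exact hφv hv0
    obtain ⟨x, hx⟩ := hvM
    exact ⟨x, fun i => by rw [← hx]; rfl⟩
  · -- (iii) → (ii)
    intro h3 g hgq hzero i
    refine ContinuousLinearMap.ext fun y => ?_
    obtain ⟨x, hx⟩ := h3 (lp.single (ENNReal.ofReal p) i y)
    have hsum := summable_opAdj hpq' Λ hB hsummable hbd g hgq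
    have h0 : (∑' j, g j (Λ j x)) = 0 := by
      have heq := tsum_opAdj_apply hsum x
      rw [hzero] at heq
      simpa using heq.symm
    have hts : (∑' j, g j (Λ j x)) = g i y := by
      rw [tsum_eq_single i (fun j hj => by
        rw [hx j, lp.single_apply_ne _ _ _ hj, map_zero])]
      rw [hx i, lp.single_apply_self]
    simp only [ContinuousLinearMap.zero_apply]
    rw [← hts]
    exact h0
end

section
/- Let Λ = {Λ_i ∈ B(X₂, Y_i)} be a pg-Bessel sequence for X₂ with bound B_Λ and Θ = {Θ_i ∈ B(X₁^*, Y_i^*)} a qg-Bessel sequence for X₁^* with bound B_Θ. For m ∈ ℓ^∞, the operator M_{m,Λ,Θ} : X₁^* → X₂^*, M_{m,Λ,Θ}(g) = Σ_i m_i Λ_i^* Θ_i g, is well defined, the series converges unconditionally for every g ∈ X₁^*, and ‖M_{m,Λ,Θ}‖ ≤ B_Λ B_Θ ‖m‖_∞. -/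
open NormedSpace Filter

/-- the (p,q)g-Bessel multiplier `M_{m,Λ,Θ} g = Σᵢ mᵢ Λᵢ* Θᵢ g` of a
pg-Bessel sequence `Λ` for `X₂` (bound `B_Λ`), a qg-Bessel sequence `Θ` for `X₁*`
(bound `B_Θ`) and `m ∈ ℓ^∞` is well defined, the series converges unconditionally
(is summable), and `‖M_{m,Λ,Θ}‖ ≤ B_Λ B_Θ ‖m‖_∞`. -/
theorem multiplier_well_defined_and_bounded
    {X₁ X₂ : Type*} [NormedAddCommGroup X₁] [NormedSpace ℝ X₁] [CompleteSpace X₁]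
    [NormedAddCommGroup X₂] [NormedSpace ℝ X₂] [CompleteSpace X₂]
    {Y : ℕ → Type*} [∀ i, NormedAddCommGroup (Y i)] [∀ i, NormedSpace ℝ (Y i)]
    [∀ i, CompleteSpace (Y i)]
    (hreflX₁ : Function.Surjective (inclusionInDoubleDual ℝ X₁))
    (hreflX₂ : Function.Surjective (inclusionInDoubleDual ℝ X₂))
    (hreflY : ∀ i, Function.Surjective (inclusionInDoubleDual ℝ (Y i)))
    (p q : ℝ) (hp : 1 < p) (hpq : 1 / p + 1 / q = 1)
    (Λ : ∀ i, X₂ →L[ℝ] Y i) (Θ : ∀ i, StrongDual ℝ X₁ →L[ℝ] StrongDual ℝ (Y i))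
    (BΛ BΘ : ℝ) (hBΛ : 0 < BΛ) (hBΘ : 0 < BΘ)
    (hΛ : ∀ x : X₂, Summable (fun i => ‖Λ i x‖ ^ p) ∧
      (∑' i, ‖Λ i x‖ ^ p) ^ (1 / p) ≤ BΛ * ‖x‖)
    (hΘ : ∀ g : StrongDual ℝ X₁, Summable (fun i => ‖Θ i g‖ ^ q) ∧
      (∑' i, ‖Θ i g‖ ^ q) ^ (1 / q) ≤ BΘ * ‖g‖)
    (m : ℕ → ℝ) (M : ℝ) (hM : IsLUB (Set.range fun i => |m i|) M) :
    ∀ g : StrongDual ℝ X₁, Summable (fun i => m i • opAdj (Λ i) (Θ i g)) ∧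
      ‖∑' i, m i • opAdj (Λ i) (Θ i g)‖ ≤ BΛ * BΘ * M * ‖g‖ := by
  classical
  have hpq' : Real.HolderConjugate p q := Real.holderConjugate_iff.2 ⟨hp, by rw [← one_div, ← one_div]; exact hpq⟩
  have hq0 : 0 < q := hpq'.symm.pos
  have hq1 : 0 < 1 / q := by positivity
  have hMb : ∀ i, |m i| ≤ M := fun i => hM.1 ⟨i, rfl⟩
  have hM0 : 0 ≤ M := le_trans (abs_nonneg (m 0)) (hMb 0)
  intro g
  set f : ℕ → StrongDual ℝ X₂ := fun i => m i • opAdj (Λ i) (Θ i g) with hf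
  -- key finite estimate
  have happ : ∀ i x, f i x = m i * (Θ i g) (Λ i x) := fun i x => rfl
  have key : ∀ t : Finset ℕ,
      ‖∑ i ∈ t, f i‖ ≤ M * BΛ * (∑ i ∈ t, ‖Θ i g‖ ^ q) ^ (1 / q) := by
    intro t
    have hrhs : 0 ≤ M * BΛ * (∑ i ∈ t, ‖Θ i g‖ ^ q) ^ (1 / q) := by positivity
    refine ContinuousLinearMap.opNorm_le_bound _ hrhs fun x => ?_
    have h1 : ‖(∑ i ∈ t, f i) x‖ ≤ ∑ i ∈ t, M * (‖Θ i g‖ * ‖Λ i x‖) := by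
      rw [ContinuousLinearMap.sum_apply]
      refine (norm_sum_le _ _).trans (Finset.sum_le_sum fun i _ => ?_)
      rw [happ, norm_mul, Real.norm_eq_abs]
      have h2 : ‖(Θ i g) (Λ i x)‖ ≤ ‖Θ i g‖ * ‖Λ i x‖ := (Θ i g).le_opNorm _
      exact mul_le_mul (hMb i) h2 (norm_nonneg _) hM0
    have h3 : ∑ i ∈ t, ‖Θ i g‖ * ‖Λ i x‖ ≤
        (∑ i ∈ t, ‖Θ i g‖ ^ q) ^ (1 / q) * (∑ i ∈ t, ‖Λ i x‖ ^ p) ^ (1 / p) := by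
      have h := Real.inner_le_Lp_mul_Lq_of_nonneg (s := t) hpq'.symm
        (f := fun i => ‖Θ i g‖) (g := fun i => ‖Λ i x‖)
        (fun i _ => norm_nonneg _) (fun i _ => norm_nonneg _)
      simpa using h
    have h4 : (∑ i ∈ t, ‖Λ i x‖ ^ p) ^ (1 / p) ≤ BΛ * ‖x‖ := by
      refine le_trans ?_ (hΛ x).2
      exact Real.rpow_le_rpow (Finset.sum_nonneg fun i _ => by positivity)
        (Summable.sum_le_tsum t (fun i _ => by positivity) (hΛ x).1) (by positivity)
    calc ‖(∑ i ∈ t, f i) x‖ ≤ ∑ i ∈ t, M * (‖Θ i g‖ * ‖Λ i x‖) := h1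
      _ = M * ∑ i ∈ t, ‖Θ i g‖ * ‖Λ i x‖ := by rw [Finset.mul_sum]
      _ ≤ M * ((∑ i ∈ t, ‖Θ i g‖ ^ q) ^ (1 / q) * (BΛ * ‖x‖)) := by
          refine mul_le_mul_of_nonneg_left (h3.trans ?_) hM0
          exact mul_le_mul_of_nonneg_left h4 (by positivity)
      _ = M * BΛ * (∑ i ∈ t, ‖Θ i g‖ ^ q) ^ (1 / q) * ‖x‖ := by ring
  -- summability
  have hsum : Summable f := by
    rw [summable_iff_vanishing_norm]
    intro ε hε
    have hC : 0 < M * BΛ + 1 := by positivity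
    have hδ : 0 < (ε / (M * BΛ + 1)) ^ q := by positivity
    obtain ⟨s, hs⟩ := summable_iff_vanishing_norm.1 (hΘ g).1 _ hδ
    refine ⟨s, fun t ht => ?_⟩
    have hsumt : 0 ≤ ∑ i ∈ t, ‖Θ i g‖ ^ q := Finset.sum_nonneg fun i _ => by positivity
    have h5 : ∑ i ∈ t, ‖Θ i g‖ ^ q < (ε / (M * BΛ + 1)) ^ q := by
      have := hs t ht
      rwa [Real.norm_of_nonneg hsumt] at this
    have h6 : (∑ i ∈ t, ‖Θ i g‖ ^ q) ^ (1 / q) < ε / (M * BΛ + 1) := by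
      have h := Real.rpow_lt_rpow hsumt h5 hq1
      rwa [← Real.rpow_mul (by positivity), mul_one_div,
        div_self (ne_of_gt hq0), Real.rpow_one] at h
    calc ‖∑ i ∈ t, f i‖ ≤ M * BΛ * (∑ i ∈ t, ‖Θ i g‖ ^ q) ^ (1 / q) := key t
      _ ≤ (M * BΛ + 1) * (∑ i ∈ t, ‖Θ i g‖ ^ q) ^ (1 / q) := by
          refine mul_le_mul_of_nonneg_right (by linarith) (by positivity)
      _ < (M * BΛ + 1) * (ε / (M * BΛ + 1)) := by
          exact mul_lt_mul_of_pos_left h6 hC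
      _ = ε := by field_simp
  refine ⟨hsum, ?_⟩
  -- norm bound
  have hbound : ∀ t : Finset ℕ, ‖∑ i ∈ t, f i‖ ≤ BΛ * BΘ * M * ‖g‖ := by
    intro t
    refine (key t).trans ?_
    have h7 : (∑ i ∈ t, ‖Θ i g‖ ^ q) ^ (1 / q) ≤ BΘ * ‖g‖ := by
      refine le_trans ?_ (hΘ g).2
      exact Real.rpow_le_rpow (Finset.sum_nonneg fun i _ => by positivity)
        (Summable.sum_le_tsum t (fun i _ => by positivity) (hΘ g).1) (by positivity)
    calc M * BΛ * (∑ i ∈ t, ‖Θ i g‖ ^ q) ^ (1 / q) ≤ M * BΛ * (BΘ * ‖g‖) :=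
        mul_le_mul_of_nonneg_left h7 (by positivity)
      _ = BΛ * BΘ * M * ‖g‖ := by ring
  exact le_of_tendsto' ((continuous_norm.tendsto _).comp hsum.hasSum) fun t => hbound t
end

section
/- Let Λ = {Λ_i ∈ B(X₂, Y_i)} be a qg-Riesz basis for X₂^* and Θ = {Θ_i ∈ B(X₁^*, Y_i^*)} a qg-Bessel sequence for X₁^* with Θ_i ≠ 0 for all i. Then the map m ↦ M_{m,Λ,Θ} from ℓ^∞ into B(X₁^*, X₂^*) is injective. -/
open NormedSpace Filter

/-- if `Λ` is a qg-Riesz basis for `X₂*` and `Θ` is a qg-Bessel sequence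
for `X₁*` with all `Θᵢ ≠ 0`, then `m ↦ M_{m,Λ,Θ}` is injective from `ℓ^∞` into
`B(X₁*, X₂*)`. -/
theorem multiplier_symbol_injective
    {X₁ X₂ : Type*} [NormedAddCommGroup X₁] [NormedSpace ℝ X₁] [CompleteSpace X₁]
    [NormedAddCommGroup X₂] [NormedSpace ℝ X₂] [CompleteSpace X₂]
    {Y : ℕ → Type*} [∀ i, NormedAddCommGroup (Y i)] [∀ i, NormedSpace ℝ (Y i)]
    [∀ i, CompleteSpace (Y i)]
    (hreflX₁ : Function.Surjective (inclusionInDoubleDual ℝ X₁))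
    (hreflX₂ : Function.Surjective (inclusionInDoubleDual ℝ X₂))
    (hreflY : ∀ i, Function.Surjective (inclusionInDoubleDual ℝ (Y i)))
    (p q : ℝ) (hp : 1 < p) (hpq : 1 / p + 1 / q = 1)
    (Λ : ∀ i, X₂ →L[ℝ] Y i) (Θ : ∀ i, StrongDual ℝ X₁ →L[ℝ] StrongDual ℝ (Y i))
    -- `Λ` is a qg-Riesz basis for `X₂*`
    (hcomplete : ∀ x : X₂, (∀ i, Λ i x = 0) → x = 0)
    (hriesz : ∃ A B : ℝ, 0 < A ∧ 0 < B ∧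
      ∀ (s : Finset ℕ) (g : ∀ i, StrongDual ℝ (Y i)),
        A * (∑ i ∈ s, ‖g i‖ ^ q) ^ (1 / q) ≤ ‖∑ i ∈ s, opAdj (Λ i) (g i)‖ ∧
        ‖∑ i ∈ s, opAdj (Λ i) (g i)‖ ≤ B * (∑ i ∈ s, ‖g i‖ ^ q) ^ (1 / q))
    -- `Θ` is a qg-Bessel sequence for `X₁*` with nonzero members
    (BΘ : ℝ) (hBΘ : 0 < BΘ)
    (hΘ : ∀ g : StrongDual ℝ X₁, Summable (fun i => ‖Θ i g‖ ^ q) ∧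
      (∑' i, ‖Θ i g‖ ^ q) ^ (1 / q) ≤ BΘ * ‖g‖)
    (hΘne : ∀ i, Θ i ≠ 0) :
    ∀ m m' : ℕ → ℝ, (∃ M, ∀ i, |m i| ≤ M) → (∃ M', ∀ i, |m' i| ≤ M') →
      (∀ g : StrongDual ℝ X₁,
        (∑' i, m i • opAdj (Λ i) (Θ i g)) = ∑' i, m' i • opAdj (Λ i) (Θ i g)) →
      m = m' := by
  intro m m' hm hm' heq
  obtain ⟨A, B, hA, hB, hAB⟩ := hriesz
  obtain ⟨M, hM⟩ := hm
  obtain ⟨M', hM'⟩ := hm'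
  have hp0 : 0 < p := lt_trans one_pos hp
  have h1q : 0 < 1 / q := by
    have h1 : 1 / p < 1 := (div_lt_one hp0).mpr hp
    linarith
  have hq0 : 0 < q := one_div_pos.mp h1q
  have hq1 : 1 < q := by
    have h2 : 0 < 1 / p := one_div_pos.mpr hp0
    have h3 : 1 / q < 1 := by linarith
    exact (div_lt_one hq0).mp h3
  funext i₀
  obtain ⟨g, hg⟩ : ∃ g, Θ i₀ g ≠ 0 := by
    by_contra h
    push_neg at h
    exact hΘne i₀ (ContinuousLinearMap.ext h)
  have hh : Summable (fun i => ‖Θ i g‖ ^ q) := (hΘ g).1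
  -- summability of the multiplier series for any bounded symbol
  have key : ∀ (c : ℕ → ℝ) (C : ℝ), (∀ i, |c i| ≤ C) →
      Summable (fun i => c i • opAdj (Λ i) (Θ i g)) := by
    intro c C hC
    have hC0 : 0 ≤ C := le_trans (abs_nonneg _) (hC 0)
    rw [summable_iff_vanishing]
    intro e he
    obtain ⟨ε, hε, hball⟩ := Metric.mem_nhds_iff.mp he
    have hden : 0 < B * (C + 1) := by positivity
    set δ : ℝ := (ε / (B * (C + 1))) ^ q with hδdef
    have hδpos : 0 < δ := Real.rpow_pos_of_pos (by positivity) q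
    obtain ⟨s, hs⟩ := (summable_iff_vanishing.mp hh) (Metric.ball 0 δ)
      (Metric.ball_mem_nhds 0 hδpos)
    refine ⟨s, fun t ht => ?_⟩
    apply hball
    rw [Metric.mem_ball, dist_zero_right]
    have ht' := hs t ht
    rw [Metric.mem_ball, dist_zero_right, Real.norm_eq_abs] at ht'
    have htnn : 0 ≤ ∑ i ∈ t, ‖Θ i g‖ ^ q :=
      Finset.sum_nonneg fun i _ => Real.rpow_nonneg (norm_nonneg _) q
    have hsum_lt : ∑ i ∈ t, ‖Θ i g‖ ^ q < δ := by rwa [abs_of_nonneg htnn] at ht'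
    have hrw : (∑ i ∈ t, c i • opAdj (Λ i) (Θ i g))
        = ∑ i ∈ t, opAdj (Λ i) (c i • Θ i g) :=
      Finset.sum_congr rfl fun i _ => (map_smul _ _ _).symm
    rw [hrw]
    have h3 : (∑ i ∈ t, ‖c i • Θ i g‖ ^ q) ≤ (C + 1) ^ q * ∑ i ∈ t, ‖Θ i g‖ ^ q := by
      rw [Finset.mul_sum]
      refine Finset.sum_le_sum fun i _ => ?_
      rw [norm_smul, Real.norm_eq_abs, Real.mul_rpow (abs_nonneg _) (norm_nonneg _)]
      exact mul_le_mul_of_nonneg_right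
        (Real.rpow_le_rpow (abs_nonneg _) (le_trans (hC i) (by linarith)) hq0.le)
        (Real.rpow_nonneg (norm_nonneg _) q)
    have hCq : 0 < (C + 1) ^ q := Real.rpow_pos_of_pos (by linarith) q
    calc ‖∑ i ∈ t, opAdj (Λ i) (c i • Θ i g)‖
        ≤ B * (∑ i ∈ t, ‖c i • Θ i g‖ ^ q) ^ (1/q) := (hAB t (fun i => c i • Θ i g)).2
      _ ≤ B * ((C + 1) ^ q * (∑ i ∈ t, ‖Θ i g‖ ^ q)) ^ (1/q) := by
          refine mul_le_mul_of_nonneg_left ?_ hB.le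
          exact Real.rpow_le_rpow
            (Finset.sum_nonneg fun i _ => Real.rpow_nonneg (norm_nonneg _) q) h3 h1q.le
      _ < B * ((C + 1) ^ q * δ) ^ (1/q) := by
          refine mul_lt_mul_of_pos_left ?_ hB
          exact Real.rpow_lt_rpow (by positivity)
            (mul_lt_mul_of_pos_left hsum_lt hCq) h1q
      _ = ε := by
          rw [Real.mul_rpow hCq.le hδpos.le, hδdef,
            ← Real.rpow_mul (by linarith : (0:ℝ) ≤ C + 1),
            ← Real.rpow_mul (by positivity : (0:ℝ) ≤ ε / (B * (C + 1))),
            mul_one_div_cancel hq0.ne', Real.rpow_one, Real.rpow_one]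
          field_simp
  have hsm := (key m M hM).hasSum
  have hsm' := (key m' M' hM').hasSum
  have hsub : HasSum (fun i => (m i - m' i) • opAdj (Λ i) (Θ i g)) 0 := by
    have h := hsm.sub hsm'
    rw [heq g, sub_self] at h
    have e : (fun i => (m i - m' i) • opAdj (Λ i) (Θ i g))
        = fun i => m i • opAdj (Λ i) (Θ i g) - m' i • opAdj (Λ i) (Θ i g) :=
      funext fun i => sub_smul (M := StrongDual ℝ X₂) _ _ _
    rw [e]
    exact h
  set G : ∀ i, StrongDual ℝ (Y i) := fun i => (m i - m' i) • Θ i g with hG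
  have hlow : ∀ s : Finset ℕ, i₀ ∈ s →
      A * ‖G i₀‖ ≤ ‖∑ i ∈ s, (m i - m' i) • opAdj (Λ i) (Θ i g)‖ := by
    intro s hi
    have hrw : ∑ i ∈ s, (m i - m' i) • opAdj (Λ i) (Θ i g)
        = ∑ i ∈ s, opAdj (Λ i) (G i) :=
      Finset.sum_congr rfl fun i _ => (map_smul _ _ _).symm
    rw [hrw]
    refine le_trans ?_ (hAB s G).1
    refine mul_le_mul_of_nonneg_left ?_ hA.le
    have h1 : ‖G i₀‖ ^ q ≤ ∑ i ∈ s, ‖G i‖ ^ q :=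
      Finset.single_le_sum (fun i _ => Real.rpow_nonneg (norm_nonneg _) q) hi
    calc ‖G i₀‖ = (‖G i₀‖ ^ q) ^ (1/q) := by
          rw [← Real.rpow_mul (norm_nonneg _), mul_one_div_cancel hq0.ne', Real.rpow_one]
      _ ≤ (∑ i ∈ s, ‖G i‖ ^ q) ^ (1/q) :=
          Real.rpow_le_rpow (Real.rpow_nonneg (norm_nonneg _) q) h1 h1q.le
  have htend : Tendsto
      (fun s : Finset ℕ => ‖∑ i ∈ s, (m i - m' i) • opAdj (Λ i) (Θ i g)‖)
      atTop (nhds 0) := by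
    have h := tendsto_norm_zero.comp hsub
    exact h
  have hfin : A * ‖G i₀‖ ≤ 0 := by
    refine ge_of_tendsto htend ?_
    filter_upwards [Filter.eventually_ge_atTop ({i₀} : Finset ℕ)] with s hs
    exact hlow s (hs (Finset.mem_singleton_self i₀))
  have hGz : G i₀ = 0 := by
    have h0 : ‖G i₀‖ ≤ 0 := by nlinarith [norm_nonneg (G i₀)]
    exact norm_le_zero_iff.mp h0
  by_contra hne
  have hne' : m i₀ - m' i₀ ≠ 0 := sub_ne_zero.mpr hne
  apply hg
  have h2 : Θ i₀ g = (m i₀ - m' i₀)⁻¹ • ((m i₀ - m' i₀) • Θ i₀ g) := by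
    rw [smul_smul, inv_mul_cancel₀ hne', one_smul]
  rw [h2]
  have h3 : (m i₀ - m' i₀) • Θ i₀ g = 0 := hGz
  rw [h3, smul_zero]
end
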